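/- arXiv:1705.04382 — 8 statements merged into one kernel-verified Lean document; each statement's English description precedes it below -/
import Mathlib

section
/- For real numbers a₁, a₂ > 0 and b₁, b₂ > 0, the double integral over the unit square ∫_0^1 ∫_0^1 x^{b₁-1} y^{b₂-1} / (−log(x^{a₁} y^{a₂})) dx dy equals the single integral ∫_0^∞ 1 / ((a₁ x + b₁)(a₂ x + b₂)) dx. -/
open MeasureTheory Real
open Set

lemma lint_exp {c : ℝ} (hc : 0 < c) :
    ∫⁻ t in Set.Ioi (0:ℝ), ENNReal.ofReal (Real.exp (-(c*t))) = ENNReal.ofReal (1/c) := by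
  rw [← ofReal_integral_eq_lintegral_ofReal]
  · congr 1
    have := MeasureTheory.integral_comp_mul_left_Ioi (fun x => Real.exp (-x)) 0 hc
    simp only [mul_zero, integral_exp_neg_Ioi, Real.exp_zero, smul_eq_mul, mul_one] at this
    rw [this, one_div]; simp
  · exact (exp_neg_integrableOn_Ioi 0 hc).congr_fun (fun x _ => by ring_nf) measurableSet_Ioi
  · exact ae_of_all _ fun t => (Real.exp_pos _).le

lemma int_rpow_Ioc {c : ℝ} (hc : 0 < c) :
    IntegrableOn (fun x : ℝ => x ^ (c-1)) (Set.Ioc 0 1) := by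
  have := intervalIntegral.intervalIntegrable_rpow' (a:=0) (b:=1) (r:=c-1) (by linarith)
  rwa [intervalIntegrable_iff_integrableOn_Ioc_of_le zero_le_one] at this

lemma lint_rpow {c : ℝ} (hc : 0 < c) :
    ∫⁻ x in Set.Ioc (0:ℝ) 1, ENNReal.ofReal (x ^ (c-1)) = ENNReal.ofReal (1/c) := by
  rw [← ofReal_integral_eq_lintegral_ofReal (int_rpow_Ioc hc)
      (((ae_restrict_iff' measurableSet_Ioc).2 (ae_of_all _ fun x hx =>
        Real.rpow_nonneg hx.1.le _)))]
  congr 1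
  rw [← intervalIntegral.integral_of_le zero_le_one,
    integral_rpow (Or.inl (by linarith : (-1:ℝ) < c - 1))]
  rw [sub_add_cancel, Real.one_rpow, Real.zero_rpow hc.ne', sub_zero]

lemma lint_rpow_Ioo {c : ℝ} (hc : 0 < c) :
    ∫⁻ x in Set.Ioo (0:ℝ) 1, ENNReal.ofReal (x ^ (c-1)) = ENNReal.ofReal (1/c) := by
  rw [setLIntegral_congr Ioo_ae_eq_Ioc]; exact lint_rpow hc

lemma pointwise_A {a₁ a₂ b₁ b₂ x y : ℝ} (ha₁ : 0 < a₁) (ha₂ : 0 < a₂)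
    (hx : x ∈ Set.Ioc (0:ℝ) 1) (hy : y ∈ Set.Ioo (0:ℝ) 1) :
    ENNReal.ofReal (x ^ (b₁-1) * y ^ (b₂-1) / (-Real.log (x ^ a₁ * y ^ a₂)))
      = ∫⁻ t in Set.Ioi (0:ℝ), ENNReal.ofReal (x ^ (a₁*t+b₁-1) * y ^ (a₂*t+b₂-1)) := by
  have hx0 := hx.1
  have hy0 := hy.1
  set c : ℝ := -(a₁ * Real.log x + a₂ * Real.log y) with hc_def
  have hlogx : Real.log x ≤ 0 := Real.log_nonpos hx0.le hx.2
  have hlogy : Real.log y < 0 := Real.log_neg hy0 hy.2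
  have hc : 0 < c := by
    have h1 : a₁ * Real.log x ≤ 0 := mul_nonpos_of_nonneg_of_nonpos ha₁.le hlogx
    have h2 : a₂ * Real.log y < 0 := mul_neg_of_pos_of_neg ha₂ hlogy
    simp only [hc_def]; linarith
  have hlog : Real.log (x ^ a₁ * y ^ a₂) = a₁ * Real.log x + a₂ * Real.log y := by
    rw [Real.log_mul (Real.rpow_pos_of_pos hx0 _).ne' (Real.rpow_pos_of_pos hy0 _).ne',
      Real.log_rpow hx0, Real.log_rpow hy0]
  have hKnn : 0 ≤ x ^ (b₁-1) * y ^ (b₂-1) := by positivity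
  have key : ∀ t : ℝ, x ^ (a₁*t+b₁-1) * y ^ (a₂*t+b₂-1)
      = (x ^ (b₁-1) * y ^ (b₂-1)) * Real.exp (-(c*t)) := by
    intro t
    rw [show a₁*t+b₁-1 = (b₁-1) + a₁*t by ring, show a₂*t+b₂-1 = (b₂-1) + a₂*t by ring,
      Real.rpow_add hx0, Real.rpow_add hy0,
      Real.rpow_def_of_pos hx0 (a₁*t), Real.rpow_def_of_pos hy0 (a₂*t),
      mul_mul_mul_comm, ← Real.exp_add]
    congr 1
    simp only [hc_def]; ring
  simp_rw [key, ENNReal.ofReal_mul hKnn]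
  rw [lintegral_const_mul' _ _ ENNReal.ofReal_ne_top, lint_exp hc,
    ← ENNReal.ofReal_mul hKnn, hlog]
  congr 1
  rw [mul_one_div]

lemma integrable_inner {a₁ a₂ b₁ b₂ y : ℝ} (ha₁ : 0 < a₁) (ha₂ : 0 < a₂)
    (hb₁ : 0 < b₁) (hy : y ∈ Set.Ioo (0:ℝ) 1) :
    IntegrableOn (fun x => x ^ (b₁-1) * y ^ (b₂-1) / (-Real.log (x ^ a₁ * y ^ a₂)))
      (Set.Ioc (0:ℝ) 1) := by
  have hy0 := hy.1
  have hlogy : Real.log y < 0 := Real.log_neg hy0 hy.2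
  set C : ℝ := y ^ (b₂-1) / (-(a₂ * Real.log y)) with hC_def
  have hC : 0 ≤ C := div_nonneg (Real.rpow_nonneg hy0.le _) (by nlinarith)
  refine Integrable.mono ((int_rpow_Ioc hb₁).const_mul C) ?_ ?_
  · exact (Measurable.aestronglyMeasurable (by measurability))
  · rw [ae_restrict_iff' measurableSet_Ioc]
    refine ae_of_all _ fun x hx => ?_
    have hx0 := hx.1
    have hlogx : Real.log x ≤ 0 := Real.log_nonpos hx0.le hx.2
    have hlog : Real.log (x ^ a₁ * y ^ a₂) = a₁ * Real.log x + a₂ * Real.log y := by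
      rw [Real.log_mul (Real.rpow_pos_of_pos hx0 _).ne' (Real.rpow_pos_of_pos hy0 _).ne',
        Real.log_rpow hx0, Real.log_rpow hy0]
    have hd : 0 < -Real.log (x ^ a₁ * y ^ a₂) := by rw [hlog]; nlinarith
    have h2 : -(a₂ * Real.log y) ≤ -Real.log (x ^ a₁ * y ^ a₂) := by rw [hlog]; nlinarith
    have hnum : 0 ≤ x ^ (b₁-1) * y ^ (b₂-1) := by positivity
    rw [Real.norm_eq_abs, Real.norm_eq_abs, abs_of_nonneg (div_nonneg hnum hd.le),
      abs_of_nonneg (by positivity : (0:ℝ) ≤ C * x ^ (b₁-1))]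
    calc x ^ (b₁-1) * y ^ (b₂-1) / (-Real.log (x ^ a₁ * y ^ a₂))
        ≤ x ^ (b₁-1) * y ^ (b₂-1) / (-(a₂ * Real.log y)) := by
          apply div_le_div_of_nonneg_left hnum (by nlinarith) h2
      _ = C * x ^ (b₁-1) := by rw [hC_def]; field_simp

set_option maxHeartbeats 1000000 in
theorem unit_square_to_single (a₁ a₂ b₁ b₂ : ℝ)
    (ha₁ : 0 < a₁) (ha₂ : 0 < a₂) (hb₁ : 0 < b₁) (hb₂ : 0 < b₂) :
    (∫ y in (0:ℝ)..1, ∫ x in (0:ℝ)..1,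
        x ^ (b₁ - 1) * y ^ (b₂ - 1) / (-Real.log (x ^ a₁ * y ^ a₂)))
      = ∫ x in Set.Ioi (0:ℝ), 1 / ((a₁ * x + b₁) * (a₂ * x + b₂)) := by
  have hnn : ∀ x ∈ Set.Ioc (0:ℝ) 1, ∀ y ∈ Set.Ioo (0:ℝ) 1,
      0 ≤ x ^ (b₁ - 1) * y ^ (b₂ - 1) / (-Real.log (x ^ a₁ * y ^ a₂)) := by
    intro x hx y hy
    have hx0 := hx.1
    have hy0 := hy.1
    have h1 : x ^ a₁ * y ^ a₂ ≤ 1 := by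
      have h2 := Real.rpow_le_one hx0.le hx.2 ha₁.le
      have h3 := Real.rpow_le_one hy0.le hy.2.le ha₂.le
      have h4 := Real.rpow_pos_of_pos hx0 a₁
      have h5 := Real.rpow_pos_of_pos hy0 a₂
      nlinarith
    have hlog : Real.log (x ^ a₁ * y ^ a₂) ≤ 0 := Real.log_nonpos (by positivity) h1
    exact div_nonneg (by positivity) (by linarith)
  rw [intervalIntegral.integral_of_le zero_le_one]
  simp_rw [intervalIntegral.integral_of_le zero_le_one]
  rw [integral_Ioc_eq_integral_Ioo]
  rw [integral_eq_lintegral_of_nonneg_ae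
    (by
      filter_upwards [ae_restrict_mem measurableSet_Ioo] with y hy
      exact setIntegral_nonneg measurableSet_Ioc fun x hx => hnn x hx y hy)
    (by
      have hm : Measurable (fun p : ℝ × ℝ =>
          p.2 ^ (b₁ - 1) * p.1 ^ (b₂ - 1) / (-Real.log (p.2 ^ a₁ * p.1 ^ a₂))) :=
        ((measurable_snd.pow measurable_const).mul (measurable_fst.pow measurable_const)).div
          (((measurable_snd.pow measurable_const).mul
            (measurable_fst.pow measurable_const)).log.neg)
      exact (hm.stronglyMeasurable.integral_prod_right').aestronglyMeasurable)]
  rw [integral_eq_lintegral_of_nonneg_ae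
    (by
      filter_upwards [ae_restrict_mem measurableSet_Ioi] with x hx
      have hx0 : (0:ℝ) < x := hx
      positivity)
    ((show Measurable (fun x : ℝ => 1 / ((a₁ * x + b₁) * (a₂ * x + b₂))) from
      measurable_const.div (((measurable_id'.const_mul a₁).add_const b₁).mul
      ((measurable_id'.const_mul a₂).add_const b₂))).aestronglyMeasurable)]
  congr 1
  calc ∫⁻ y in Set.Ioo (0:ℝ) 1, ENNReal.ofReal (∫ x in Set.Ioc (0:ℝ) 1,
          x ^ (b₁ - 1) * y ^ (b₂ - 1) / (-Real.log (x ^ a₁ * y ^ a₂)))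
      = ∫⁻ y in Set.Ioo (0:ℝ) 1, ∫⁻ x in Set.Ioc (0:ℝ) 1,
          ENNReal.ofReal (x ^ (b₁ - 1) * y ^ (b₂ - 1) / (-Real.log (x ^ a₁ * y ^ a₂))) := by
        refine setLIntegral_congr_fun measurableSet_Ioo (fun y hy => ?_)
        rw [ofReal_integral_eq_lintegral_ofReal (integrable_inner ha₁ ha₂ hb₁ hy)
          ((ae_restrict_iff' measurableSet_Ioc).2 (ae_of_all _ fun x hx => hnn x hx y hy))]
    _ = ∫⁻ y in Set.Ioo (0:ℝ) 1, ∫⁻ x in Set.Ioc (0:ℝ) 1, ∫⁻ t in Set.Ioi (0:ℝ),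
          ENNReal.ofReal (x ^ (a₁*t+b₁-1) * y ^ (a₂*t+b₂-1)) := by
        refine setLIntegral_congr_fun measurableSet_Ioo (fun y hy => ?_)
        refine setLIntegral_congr_fun measurableSet_Ioc (fun x hx => ?_)
        exact pointwise_A ha₁ ha₂ hx hy
    _ = ∫⁻ y in Set.Ioo (0:ℝ) 1, ∫⁻ t in Set.Ioi (0:ℝ), ∫⁻ x in Set.Ioc (0:ℝ) 1,
          ENNReal.ofReal (x ^ (a₁*t+b₁-1) * y ^ (a₂*t+b₂-1)) := by
        refine setLIntegral_congr_fun measurableSet_Ioo (fun y hy => ?_)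
        refine lintegral_lintegral_swap (Measurable.aemeasurable ?_)
        exact ((measurable_fst.pow (by measurability)).mul
          (measurable_const.pow (by measurability))).ennreal_ofReal
    _ = ∫⁻ y in Set.Ioo (0:ℝ) 1, ∫⁻ t in Set.Ioi (0:ℝ),
          ENNReal.ofReal (y ^ (a₂*t+b₂-1)) * ENNReal.ofReal (1/(a₁*t+b₁)) := by
        refine setLIntegral_congr_fun measurableSet_Ioo (fun y hy => ?_)
        refine setLIntegral_congr_fun measurableSet_Ioi (fun t ht => ?_)
        have ht0 : (0:ℝ) < t := ht
        have h1 : 0 < a₁*t+b₁ := by nlinarith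
        have hynn : 0 ≤ y ^ (a₂*t+b₂-1) := Real.rpow_nonneg hy.1.le _
        simp_rw [ENNReal.ofReal_mul' hynn]
        rw [lintegral_mul_const' _ _ ENNReal.ofReal_ne_top,
          show a₁*t+b₁-1 = (a₁*t+b₁)-1 by ring, lint_rpow h1, mul_comm]
    _ = ∫⁻ t in Set.Ioi (0:ℝ), ∫⁻ y in Set.Ioo (0:ℝ) 1,
          ENNReal.ofReal (y ^ (a₂*t+b₂-1)) * ENNReal.ofReal (1/(a₁*t+b₁)) := by
        refine lintegral_lintegral_swap (Measurable.aemeasurable ?_)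
        exact ((measurable_fst.pow (by measurability)).ennreal_ofReal).mul
          (Measurable.ennreal_ofReal (by measurability))
    _ = ∫⁻ t in Set.Ioi (0:ℝ), ENNReal.ofReal (1 / ((a₁ * t + b₁) * (a₂ * t + b₂))) := by
        refine setLIntegral_congr_fun measurableSet_Ioi (fun t ht => ?_)
        have ht0 : (0:ℝ) < t := ht
        have h1 : 0 < a₁*t+b₁ := by nlinarith
        have h2 : 0 < a₂*t+b₂ := by nlinarith
        rw [lintegral_mul_const' _ _ ENNReal.ofReal_ne_top,
          show a₂*t+b₂-1 = (a₂*t+b₂)-1 by ring, lint_rpow_Ioo h2,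
          ← ENNReal.ofReal_mul (by positivity)]
        congr 1
        field_simp
end

section
/- ∫_0^1 ∫_0^1 (−1)/log(xy) dx dy = 1, and more generally for every natural number n ≥ 2, the n-fold integral over the unit cube of (−1)/log(x₁ x₂ ⋯ x_n) with respect to x₁, …, x_n equals 1/(n−1). -/
open MeasureTheory Real Set

section Helpers

lemma measurable_prod_pi {n : ℕ} : Measurable (fun x : Fin n → ℝ => ∏ i, x i) :=
  Finset.measurable_prod _ fun i _ => measurable_pi_apply i

lemma cube_meas (n : ℕ) : MeasurableSet (Set.univ.pi fun _ : Fin n => Set.Ioo (0:ℝ) 1) :=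
  MeasurableSet.univ_pi fun _ => measurableSet_Ioo

lemma h1_int {p : ℝ} (hp : 0 < p) (hp1 : p < 1) :
    IntegrableOn (fun t : ℝ => Real.exp (Real.log p * t)) (Set.Ioi 0) := by
  have hb : 0 < -Real.log p := by have := Real.log_neg hp hp1; linarith
  have h := exp_neg_integrableOn_Ioi 0 hb
  simpa [neg_mul, neg_neg] using h

lemma h1_val {p : ℝ} (hp : 0 < p) (hp1 : p < 1) :
    ∫ t in Set.Ioi (0:ℝ), Real.exp (Real.log p * t) = -1 / Real.log p := by
  have hb : 0 < -Real.log p := by have := Real.log_neg hp hp1; linarith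
  have hlog : Real.log p ≠ 0 := by linarith
  have h := integral_rpow_mul_exp_neg_mul_Ioi (a := 1) one_pos hb
  rw [Real.Gamma_one] at h
  simp only [sub_self, Real.rpow_zero, one_mul, Real.rpow_one, mul_one] at h
  have heq : (fun t : ℝ => Real.exp (Real.log p * t))
      = fun t : ℝ => Real.exp (-(-Real.log p * t)) := by
    funext t; ring_nf
  rw [heq, h]
  field_simp

lemma h2_int {t : ℝ} (ht : 0 ≤ t) :
    IntegrableOn (fun x : ℝ => x ^ t) (Set.Ioo (0:ℝ) 1) :=
  (intervalIntegrable_iff_integrableOn_Ioo_of_le zero_le_one).mp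
    (intervalIntegral.intervalIntegrable_rpow (a := 0) (b := 1) (Or.inl ht))

lemma h2_val {t : ℝ} (ht : 0 ≤ t) :
    ∫ x in Set.Ioo (0:ℝ) 1, x ^ t = 1 / (t + 1) := by
  have h := integral_rpow (a := 0) (b := 1) (Or.inl (by linarith : (-1:ℝ) < t))
  rw [intervalIntegral.integral_of_le zero_le_one, integral_Ioc_eq_integral_Ioo] at h
  rw [h, Real.one_rpow, Real.zero_rpow (by linarith)]
  ring

lemma h3_cast {n : ℕ} (hn : 2 ≤ n) : -(n:ℝ) < -1 := by
  have : (2:ℝ) ≤ (n:ℝ) := by exact_mod_cast hn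
  linarith

lemma h3_pre : (fun x : ℝ => x + 1) ⁻¹' Set.Ioi 1 = Set.Ioi 0 := by
  ext x
  simp only [Set.mem_preimage, Set.mem_Ioi]
  constructor <;> intro h <;> linarith

lemma h3_int {n : ℕ} (hn : 2 ≤ n) :
    IntegrableOn (fun t : ℝ => (t + 1) ^ (-(n:ℝ))) (Set.Ioi 0) := by
  have key := ((measurePreserving_add_right volume (1:ℝ)).restrict_preimage_emb
    (measurableEmbedding_addRight 1) (Set.Ioi 1)).integrable_comp_emb
    (measurableEmbedding_addRight 1) (g := fun y : ℝ => y ^ (-(n:ℝ)))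
  rw [h3_pre] at key
  exact key.mpr (integrableOn_Ioi_rpow_of_lt (h3_cast hn) one_pos)

lemma h3_val {n : ℕ} (hn : 2 ≤ n) :
    ∫ t in Set.Ioi (0:ℝ), (t + 1) ^ (-(n:ℝ)) = 1 / ((n:ℝ) - 1) := by
  have h := (measurePreserving_add_right volume (1:ℝ)).setIntegral_preimage_emb
    (measurableEmbedding_addRight 1) (fun y : ℝ => y ^ (-(n:ℝ))) (Set.Ioi 1)
  rw [h3_pre] at h
  rw [h, integral_Ioi_rpow_of_lt (h3_cast hn) one_pos, Real.one_rpow]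
  have h1 : -(n:ℝ) + 1 = -((n:ℝ) - 1) := by ring
  rw [h1, div_neg, neg_div, neg_neg]

lemma key4 (n : ℕ) {t : ℝ} (ht : 0 ≤ t) :
    (∫ x : Fin n → ℝ in Set.univ.pi fun _ => Set.Ioo (0:ℝ) 1, ∏ i, (x i) ^ t)
      = (1 / (t + 1)) ^ n := by
  rw [← integral_indicator (cube_meas n)]
  have heq : (Set.univ.pi fun _ : Fin n => Set.Ioo (0:ℝ) 1).indicator
        (fun x => ∏ i, (x i) ^ t)
      = fun x => ∏ i, (Set.Ioo (0:ℝ) 1).indicator (fun u : ℝ => u ^ t) (x i) := by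
    funext x
    by_cases hx : x ∈ Set.univ.pi fun _ : Fin n => Set.Ioo (0:ℝ) 1
    · rw [Set.indicator_of_mem hx]
      exact Finset.prod_congr rfl fun i _ =>
        (Set.indicator_of_mem (hx i (Set.mem_univ i)) (fun u : ℝ => u ^ t)).symm
    · rw [Set.indicator_of_notMem hx]
      simp only [Set.mem_univ_pi, not_forall] at hx
      obtain ⟨i, hi⟩ := hx
      exact (Finset.prod_eq_zero (Finset.mem_univ i)
        (Set.indicator_of_notMem hi _)).symm
  rw [heq,
    MeasureTheory.integral_fintype_prod_volume_eq_pow (ι := Fin n)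
      (fun u : ℝ => (Set.Ioo (0:ℝ) 1).indicator (fun v : ℝ => v ^ t) u),
    integral_indicator measurableSet_Ioo, h2_val ht, Fintype.card_fin]

lemma main_lemma (n : ℕ) (hn : 2 ≤ n) :
    IntegrableOn (fun x : Fin n → ℝ => (-1) / Real.log (∏ i, x i))
      (Set.univ.pi fun _ => Set.Ioo (0:ℝ) 1) ∧
    (∫ x : Fin n → ℝ in Set.univ.pi fun _ => Set.Ioo (0:ℝ) 1,
        (-1) / Real.log (∏ i, x i)) = 1 / ((n : ℝ) - 1) := by
  haveI : Nonempty (Fin n) := ⟨⟨0, by omega⟩⟩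
  set C : Set (Fin n → ℝ) := Set.univ.pi fun _ => Set.Ioo (0:ℝ) 1 with hCdef
  have hCmeas : MeasurableSet C := cube_meas n
  set μ : Measure (Fin n → ℝ) := volume.restrict C with hμdef
  set ν : Measure ℝ := volume.restrict (Set.Ioi 0) with hνdef
  set F : (Fin n → ℝ) → ℝ → ℝ := fun x t => Real.exp (Real.log (∏ i, x i) * t) with hFdef
  have hprod_pos : ∀ x ∈ C, 0 < ∏ i, x i := fun x hx =>
    Finset.prod_pos fun i _ => (hx i (Set.mem_univ i)).1
  have hprod_lt : ∀ x ∈ C, ∏ i, x i < 1 := by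
    intro x hx
    have := Finset.prod_lt_prod_of_nonempty (f := fun i => x i) (g := fun _ => (1:ℝ))
      (fun i _ => (hx i (Set.mem_univ i)).1)
      (fun i _ => (hx i (Set.mem_univ i)).2) Finset.univ_nonempty
    simpa using this
  have hFmeas : Measurable (fun p : (Fin n → ℝ) × ℝ => F p.1 p.2) :=
    Real.measurable_exp.comp
      ((Real.measurable_log.comp (measurable_prod_pi.comp measurable_fst)).mul measurable_snd)
  haveI : IsFiniteMeasure μ := by
    constructor
    rw [hμdef, Measure.restrict_apply_univ, hCdef, volume_pi_pi]
    simp [Real.volume_Ioo]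
  have hInt_t : ∀ t : ℝ, 0 ≤ t → Integrable (fun x => F x t) μ := by
    intro t ht
    refine Integrable.mono' (integrable_const (1:ℝ))
      ((hFmeas.comp (measurable_id.prodMk measurable_const)).aestronglyMeasurable) ?_
    filter_upwards [ae_restrict_mem hCmeas] with x hx
    rw [Real.norm_eq_abs, abs_of_pos (Real.exp_pos _)]
    refine Real.exp_le_one_iff.mpr ?_
    have hlog : Real.log (∏ i, x i) ≤ 0 :=
      Real.log_nonpos (hprod_pos x hx).le (hprod_lt x hx).le
    exact mul_nonpos_iff.mpr (Or.inr ⟨hlog, ht⟩)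
  have hval_t : ∀ t : ℝ, 0 ≤ t → ∫ x, F x t ∂μ = (1 / (t + 1)) ^ n := by
    intro t ht
    have hcongr : ∫ x, F x t ∂μ = ∫ x in C, ∏ i, (x i) ^ t := by
      refine setIntegral_congr_fun hCmeas fun x hx => ?_
      have hp := hprod_pos x hx
      calc F x t = (∏ i, x i) ^ t := (Real.rpow_def_of_pos hp t).symm
        _ = ∏ i, (x i) ^ t :=
          (Real.finset_prod_rpow _ _ (fun i _ => (hx i (Set.mem_univ i)).1.le) t).symm
    rw [hcongr, hCdef, key4 n ht]
  have hIntF : Integrable (Function.uncurry F) (μ.prod ν) := by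
    constructor
    · exact hFmeas.aestronglyMeasurable
    · refine (hasFiniteIntegral_iff_ofReal (Filter.Eventually.of_forall
        fun p => (Real.exp_pos _).le)).mpr ?_
      have hb : (fun t => ∫⁻ x, ENNReal.ofReal (F x t) ∂μ)
          =ᵐ[ν] fun t => ENNReal.ofReal ((t+1) ^ (-(n:ℝ))) := by
        filter_upwards [ae_restrict_mem measurableSet_Ioi] with t ht
        have := ofReal_integral_eq_lintegral_ofReal (hInt_t t ht.le)
          (Filter.Eventually.of_forall fun x => (Real.exp_pos _).le)
        rw [← this, hval_t t ht.le]
        have ht' : (0:ℝ) < t := ht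
        congr 1
        rw [Real.rpow_neg (by linarith), Real.rpow_natCast, one_div, inv_pow]
      have hnn : (0:ℝ → ℝ) ≤ᵐ[ν] fun t => (t+1) ^ (-(n:ℝ)) := by
        filter_upwards [ae_restrict_mem measurableSet_Ioi] with t ht
        have ht' : (0:ℝ) < t := ht
        simp only [Pi.zero_apply]
        positivity
      refine ((lintegral_prod_symm _ hFmeas.ennreal_ofReal.aemeasurable).trans
        ((lintegral_congr_ae hb).trans
          (ofReal_integral_eq_lintegral_ofReal (h3_int hn) hnn).symm)).trans_lt ?_
      exact ENNReal.ofReal_lt_top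
  have hswap := MeasureTheory.integral_integral_swap (f := F) hIntF
  have hae : (fun x => ∫ t, F x t ∂ν)
      =ᵐ[μ] fun x => (-1) / Real.log (∏ i, x i) := by
    filter_upwards [ae_restrict_mem hCmeas] with x hx
    exact h1_val (hprod_pos x hx) (hprod_lt x hx)
  have hL : ∫ x, (∫ t, F x t ∂ν) ∂μ = ∫ x, (-1) / Real.log (∏ i, x i) ∂μ :=
    integral_congr_ae hae
  have hR : ∫ t, (∫ x, F x t ∂μ) ∂ν = 1 / ((n:ℝ) - 1) := by
    have hcongr : ∫ t, (∫ x, F x t ∂μ) ∂ν = ∫ t in Set.Ioi (0:ℝ), (t+1) ^ (-(n:ℝ)) := by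
      refine integral_congr_ae ?_
      filter_upwards [ae_restrict_mem measurableSet_Ioi] with t ht
      have ht' : (0:ℝ) < t := ht
      rw [hval_t t ht.le, Real.rpow_neg (by linarith), Real.rpow_natCast, one_div, inv_pow]
    rw [hcongr, h3_val hn]
  have hIf : Integrable (fun x : Fin n → ℝ => (-1) / Real.log (∏ i, x i)) μ :=
    hIntF.integral_prod_left.congr hae
  refine ⟨hIf, ?_⟩
  calc (∫ x in C, (-1) / Real.log (∏ i, x i)) = ∫ x, (∫ t, F x t ∂ν) ∂μ := hL.symm
    _ = ∫ t, (∫ x, F x t ∂μ) ∂ν := hswap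
    _ = 1 / ((n:ℝ) - 1) := hR

end Helpers

theorem cube_integral_one_over_neg_log :
    (∫ y in (0:ℝ)..1, ∫ x in (0:ℝ)..1, (-1) / Real.log (x * y)) = 1 ∧
    ∀ n : ℕ, 2 ≤ n →
      (∫ x : Fin n → ℝ in Set.univ.pi fun _ => Set.Ioo (0:ℝ) 1,
          (-1) / Real.log (∏ i, x i)) = 1 / ((n : ℝ) - 1) := by
  constructor
  · -- the double integral, from the case n = 2
    obtain ⟨hint2, hval2⟩ := main_lemma 2 le_rfl
    set g : ℝ × ℝ → ℝ := fun z => (-1) / Real.log (z.2 * z.1) with hgdef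
    have hge : ∀ x : Fin 2 → ℝ, g (MeasurableEquiv.finTwoArrow x)
        = (-1) / Real.log (∏ i, x i) := by
      intro x
      simp only [hgdef, MeasurableEquiv.finTwoArrow_apply, Fin.prod_univ_two]
      rw [mul_comm]
    have hmp := volume_preserving_finTwoArrow ℝ
    have hemb := (MeasurableEquiv.finTwoArrow (α := ℝ)).measurableEmbedding
    have hpre : (MeasurableEquiv.finTwoArrow (α := ℝ)) ⁻¹'
        (Set.Ioo (0:ℝ) 1 ×ˢ Set.Ioo (0:ℝ) 1)
        = Set.univ.pi fun _ : Fin 2 => Set.Ioo (0:ℝ) 1 := by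
      ext x
      simp [MeasurableEquiv.finTwoArrow_apply, Set.mem_univ_pi, Fin.forall_fin_two]
    have htrans : (∫ z in Set.Ioo (0:ℝ) 1 ×ˢ Set.Ioo (0:ℝ) 1, g z
        ∂(volume : Measure (ℝ × ℝ))) = 1 := by
      rw [← hmp.setIntegral_preimage_emb hemb g _, hpre]
      have : (∫ x : Fin 2 → ℝ in Set.univ.pi fun _ => Set.Ioo (0:ℝ) 1,
          g (MeasurableEquiv.finTwoArrow x))
          = ∫ x : Fin 2 → ℝ in Set.univ.pi fun _ => Set.Ioo (0:ℝ) 1,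
            (-1) / Real.log (∏ i, x i) := by
        exact integral_congr_ae (Filter.Eventually.of_forall fun x => hge x)
      rw [this, hval2]
      norm_num
    have hgInt : Integrable g
        (((volume : Measure ℝ).restrict (Set.Ioo 0 1)).prod
          ((volume : Measure ℝ).restrict (Set.Ioo 0 1))) := by
      have h1 : Integrable (fun x : Fin 2 → ℝ => g (MeasurableEquiv.finTwoArrow x))
          (volume.restrict (Set.univ.pi fun _ : Fin 2 => Set.Ioo (0:ℝ) 1)) :=
        hint2.congr (Filter.Eventually.of_forall fun x => (hge x).symm)
      have h2 := (hmp.restrict_preimage_emb hemb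
        (Set.Ioo (0:ℝ) 1 ×ˢ Set.Ioo (0:ℝ) 1)).integrable_comp_emb hemb (g := g)
      rw [hpre] at h2
      have h3 : Integrable g ((volume : Measure (ℝ × ℝ)).restrict
          (Set.Ioo (0:ℝ) 1 ×ˢ Set.Ioo (0:ℝ) 1)) := h2.mp h1
      rwa [Measure.prod_restrict, ← MeasureTheory.Measure.volume_eq_prod]
    rw [intervalIntegral.integral_of_le zero_le_one, integral_Ioc_eq_integral_Ioo]
    have hinner : ∀ y : ℝ, (∫ x in (0:ℝ)..1, (-1) / Real.log (x * y))
        = ∫ x in Set.Ioo (0:ℝ) 1, (-1) / Real.log (x * y) := by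
      intro y
      rw [intervalIntegral.integral_of_le zero_le_one, integral_Ioc_eq_integral_Ioo]
    simp_rw [hinner]
    have := MeasureTheory.integral_integral
      (f := fun y x : ℝ => (-1) / Real.log (x * y)) hgInt
    rw [this]
    rw [Measure.prod_restrict, ← MeasureTheory.Measure.volume_eq_prod]
    exact htrans
  · intro n hn
    exact (main_lemma n hn).2
end

section
/- For natural numbers n > k ≥ 1, the n-fold integral over the unit cube [0,1]^n of (−1)^k/(log(x₁ x₂ ⋯ x_n))^k equals 1/((n−1)(n−2)⋯(n−k)). -/
open MeasureTheory Real
open Set Filter Topology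

lemma key_integrable (n k : ℕ) (hk : 1 ≤ k) (hkn : k < n) :
    IntegrableOn (fun s : ℝ => s ^ ((k:ℝ)-1) * (1+s) ^ (-(n:ℝ))) (Ioi 0) := by
  have hkr : (1:ℝ) ≤ (k:ℝ) := by exact_mod_cast hk
  have hknr : (k:ℝ) < (n:ℝ) := by exact_mod_cast hkn
  have h01 : IntegrableOn (fun s : ℝ => s ^ ((k:ℝ)-1) * (1+s) ^ (-(n:ℝ))) (Ioc 0 1) := by
    apply (ContinuousOn.integrableOn_compact isCompact_Icc ?_).mono_set Ioc_subset_Icc_self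
    apply ContinuousOn.mul
    · intro x hx
      exact (Real.continuousAt_rpow_const x _ (Or.inr (by linarith))).continuousWithinAt
    · intro x hx
      apply ContinuousWithinAt.rpow_const
      · exact (continuous_const.add continuous_id).continuousWithinAt
      · left; intro h; rw [mem_Icc] at hx; linarith [hx.1]
  have h1i : IntegrableOn (fun s : ℝ => s ^ ((k:ℝ)-1) * (1+s) ^ (-(n:ℝ))) (Ioi 1) := by
    have hint : IntegrableOn (fun s : ℝ => s ^ ((k:ℝ)-1 + -(n:ℝ))) (Ioi 1) :=
      integrableOn_Ioi_rpow_of_lt (by linarith) one_pos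
    apply hint.mono' ?_ ?_
    · apply ContinuousOn.aestronglyMeasurable ?_ measurableSet_Ioi
      apply ContinuousOn.mul
      · intro x hx
        exact (Real.continuousAt_rpow_const x _ (Or.inr (by linarith))).continuousWithinAt
      · intro x hx
        apply ContinuousWithinAt.rpow_const
        · exact (continuous_const.add continuous_id).continuousWithinAt
        · left; intro h; rw [mem_Ioi] at hx; linarith
    · filter_upwards [ae_restrict_mem measurableSet_Ioi] with s (hs : 1 < s)
      have hs0 : (0:ℝ) < s := by linarith
      rw [norm_mul, norm_of_nonneg (rpow_nonneg hs0.le _),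
        norm_of_nonneg (rpow_nonneg (by linarith) _), Real.rpow_add hs0]
      exact mul_le_mul_of_nonneg_left
        (Real.rpow_le_rpow_of_nonpos hs0 (by linarith) (by simp)) (rpow_nonneg hs0.le _)
  have h := h01.union h1i
  rwa [Ioc_union_Ioi_eq_Ioi zero_le_one] at h

lemma base_value (n : ℕ) (hn : 1 < n) :
    ∫ s in Ioi (0:ℝ), (1+s) ^ (-(n:ℝ)) = 1/((n:ℝ)-1) := by
  have hnr : (1:ℝ) < (n:ℝ) := by exact_mod_cast hn
  have h := integral_Ioi_of_hasDerivAt_of_tendsto (a := 0)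
      (f := fun s : ℝ => -(1+s) ^ (1-(n:ℝ)) / ((n:ℝ)-1))
      (f' := fun s : ℝ => (1+s) ^ (-(n:ℝ))) (m := 0) ?_ ?_ ?_ ?_
  · rw [h, add_zero, Real.one_rpow]
    ring
  · apply ContinuousWithinAt.div_const
    apply ContinuousWithinAt.neg
    apply ContinuousWithinAt.rpow_const
    · exact (continuous_const.add continuous_id).continuousWithinAt
    · left; norm_num
  · intro x hx
    rw [mem_Ioi] at hx
    have h1x : (0:ℝ) < 1 + x := by linarith
    have hd : HasDerivAt (fun s : ℝ => (1+s) ^ (1-(n:ℝ)))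
        (1 * (1-(n:ℝ)) * (1+x) ^ (1-(n:ℝ)-1)) x :=
      HasDerivAt.rpow_const ((hasDerivAt_id x).const_add 1) (Or.inl h1x.ne')
    have hD := (hd.neg).div_const ((n:ℝ)-1)
    convert hD using 1
    · rfl
    · rfl
    rw [show (1:ℝ)-(n:ℝ)-1 = -(n:ℝ) by ring, eq_div_iff (by linarith : (n:ℝ)-1 ≠ 0)]
    ring
  · have h2 := key_integrable n 1 le_rfl hn
    rw [Nat.cast_one] at h2
    refine h2.congr_fun (fun s hs => ?_) measurableSet_Ioi
    beta_reduce
    rw [sub_self, Real.rpow_zero, one_mul]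
  · have hlim : Tendsto (fun s : ℝ => (1+s) ^ (-((n:ℝ)-1))) atTop (𝓝 0) :=
      (tendsto_rpow_neg_atTop (by linarith)).comp (tendsto_atTop_add_const_left _ 1 tendsto_id)
    have h3 := (hlim.neg).div_const ((n:ℝ)-1)
    rw [neg_zero, zero_div] at h3
    refine h3.congr fun s => ?_
    rw [show -((n:ℝ)-1) = 1-(n:ℝ) by ring]

lemma step_rel (n k : ℕ) (hk : 1 ≤ k) (hkn : k + 1 < n) :
    ((n:ℝ)-1-(k:ℝ)) * ∫ s in Ioi (0:ℝ), s ^ (k:ℝ) * (1+s) ^ (-(n:ℝ))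
      = (k:ℝ) * ∫ s in Ioi (0:ℝ), s ^ ((k:ℝ)-1) * (1+s) ^ (-(n:ℝ)) := by
  have hkr : (1:ℝ) ≤ (k:ℝ) := by exact_mod_cast hk
  have hknr : (k:ℝ) + 1 < (n:ℝ) := by exact_mod_cast hkn
  have hI1 := key_integrable n k hk (by omega)
  have hI2 : IntegrableOn (fun s : ℝ => s ^ (k:ℝ) * (1+s) ^ (-(n:ℝ))) (Ioi 0) := by
    have h2 := key_integrable n (k+1) (by omega) hkn
    refine h2.congr_fun (fun s hs => ?_) measurableSet_Ioi
    push_cast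
    rw [add_sub_cancel_right]
  have hH := integral_Ioi_of_hasDerivAt_of_tendsto (a := 0)
      (f := fun s : ℝ => s ^ (k:ℝ) * (1+s) ^ (1-(n:ℝ)))
      (f' := fun s : ℝ => (k:ℝ) * (s ^ ((k:ℝ)-1) * (1+s) ^ (-(n:ℝ)))
        - ((n:ℝ)-1-(k:ℝ)) * (s ^ (k:ℝ) * (1+s) ^ (-(n:ℝ)))) (m := 0) ?_ ?_ ?_ ?_
  · rw [integral_sub (hI1.const_mul _) (hI2.const_mul _), integral_const_mul,
      integral_const_mul, Real.zero_rpow (by positivity), zero_mul, zero_sub, neg_zero] at hH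
    linarith
  · apply ContinuousWithinAt.mul
    · exact (Real.continuous_rpow_const (by positivity)).continuousWithinAt
    · apply ContinuousWithinAt.rpow_const
      · exact (continuous_const.add continuous_id).continuousWithinAt
      · left; norm_num
  · intro x hx
    rw [mem_Ioi] at hx
    have h1x : (0:ℝ) < 1 + x := by linarith
    have hd1 : HasDerivAt (fun s : ℝ => s ^ (k:ℝ)) (1 * (k:ℝ) * x ^ ((k:ℝ)-1)) x :=
      (hasDerivAt_id x).rpow_const (Or.inl hx.ne')
    have hd2 : HasDerivAt (fun s : ℝ => (1+s) ^ (1-(n:ℝ)))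
        (1 * (1-(n:ℝ)) * (1+x) ^ (1-(n:ℝ)-1)) x :=
      HasDerivAt.rpow_const ((hasDerivAt_id x).const_add 1) (Or.inl h1x.ne')
    have hd := hd1.mul hd2
    convert hd using 1
    · rfl
    · rfl
    beta_reduce
    have hxk : x ^ (k:ℝ) = x ^ ((k:ℝ)-1) * x := by
      conv_lhs => rw [show (k:ℝ) = ((k:ℝ)-1)+1 by ring]
      rw [Real.rpow_add hx, Real.rpow_one]
    have h1nx : (1+x) ^ (1-(n:ℝ)) = (1+x) * (1+x) ^ (-(n:ℝ)) := by
      conv_lhs => rw [show (1:ℝ)-(n:ℝ) = 1 + -(n:ℝ) by ring]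
      rw [Real.rpow_add h1x, Real.rpow_one]
    rw [show (1:ℝ)-(n:ℝ)-1 = -(n:ℝ) by ring, h1nx, hxk]
    ring
  · exact (hI1.const_mul _).sub (hI2.const_mul _)
  · have htend : Tendsto (fun s : ℝ => (1+s) ^ ((k:ℝ)+1-(n:ℝ))) atTop (𝓝 0) := by
      have h4 := (tendsto_rpow_neg_atTop (y := (n:ℝ)-(k:ℝ)-1) (by linarith)).comp
        (tendsto_atTop_add_const_left _ 1 (tendsto_id (α := ℝ)))
      refine h4.congr fun s => ?_
      simp only [Function.comp_apply, id]
      rw [show -((n:ℝ)-(k:ℝ)-1) = (k:ℝ)+1-(n:ℝ) by ring]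
    apply squeeze_zero' ?_ ?_ htend
    · filter_upwards [eventually_ge_atTop (0:ℝ)] with s hs
      exact mul_nonneg (rpow_nonneg hs _) (rpow_nonneg (by linarith) _)
    · filter_upwards [eventually_ge_atTop (0:ℝ)] with s hs
      have h5 : s ^ (k:ℝ) ≤ (1+s) ^ (k:ℝ) :=
        Real.rpow_le_rpow hs (by linarith) (by positivity)
      calc s ^ (k:ℝ) * (1+s) ^ (1-(n:ℝ)) ≤ (1+s) ^ (k:ℝ) * (1+s) ^ (1-(n:ℝ)) :=
            mul_le_mul_of_nonneg_right h5 (rpow_nonneg (by linarith) _)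
        _ = (1+s) ^ ((k:ℝ)+1-(n:ℝ)) := by
            rw [← Real.rpow_add (by linarith : (0:ℝ) < 1+s)]
            ring_nf

lemma prod_pos_aux (n k : ℕ) (hkn : k < n) :
    0 < ∏ j ∈ Finset.range k, ((n:ℝ)-1-(j:ℝ)) := by
  apply Finset.prod_pos
  intro j hj
  rw [Finset.mem_range] at hj
  have h1 : j + 2 ≤ n := by omega
  have h2 : (j:ℝ) + 2 ≤ (n:ℝ) := by exact_mod_cast h1
  linarith

lemma key_value (n k : ℕ) (hk : 1 ≤ k) (hkn : k < n) :
    ∫ s in Ioi (0:ℝ), s ^ ((k:ℝ)-1) * (1+s) ^ (-(n:ℝ))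
      = (Nat.factorial (k-1) : ℝ) / ∏ j ∈ Finset.range k, ((n:ℝ)-1-(j:ℝ)) := by
  induction k, hk using Nat.le_induction with
  | base =>
    rw [show ∫ s in Ioi (0:ℝ), s ^ (((1:ℕ):ℝ)-1) * (1+s) ^ (-(n:ℝ))
        = ∫ s in Ioi (0:ℝ), (1+s) ^ (-(n:ℝ)) from
      setIntegral_congr_fun measurableSet_Ioi fun s hs => by
        rw [Nat.cast_one, sub_self, Real.rpow_zero, one_mul]]
    rw [base_value n hkn, Finset.prod_range_one]
    norm_num
  | succ k hk1 ih =>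
    have hkn' : k < n := by omega
    have hrel := step_rel n k hk1 hkn
    have hI := ih hkn'
    have hP := prod_pos_aux n k hkn'
    have hc : (0:ℝ) < (n:ℝ)-1-(k:ℝ) := by
      have : (k:ℝ) + 1 < (n:ℝ) := by exact_mod_cast hkn
      linarith
    have hgoal : ∫ s in Ioi (0:ℝ), s ^ (((k+1:ℕ):ℝ)-1) * (1+s) ^ (-(n:ℝ))
        = ∫ s in Ioi (0:ℝ), s ^ ((k:ℝ)) * (1+s) ^ (-(n:ℝ)) :=
      setIntegral_congr_fun measurableSet_Ioi fun s hs => by push_cast; rw [add_sub_cancel_right]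
    rw [hgoal, Finset.prod_range_succ, Nat.add_sub_cancel]
    rw [hI] at hrel
    have hfact : ((Nat.factorial k : ℕ):ℝ) = (k:ℝ) * (Nat.factorial (k-1) : ℝ) := by
      rw [← Nat.cast_mul]
      congr 1
      rw [← Nat.mul_factorial_pred (by omega), mul_comm]
    rw [eq_div_iff (by positivity)]
    rw [hfact]
    field_simp at hrel ⊢
    linarith [hrel]

lemma one_dim_eval (s : ℝ) (hs : 0 < s) :
    ∫ t in Ioo (0:ℝ) 1, t ^ s = 1/(s+1) := by
  rw [← integral_Ioc_eq_integral_Ioo, ← intervalIntegral.integral_of_le zero_le_one,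
    integral_rpow (Or.inl (by linarith))]
  rw [Real.one_rpow, Real.zero_rpow (by linarith)]
  norm_num

lemma one_dim_integrable (s : ℝ) (hs : 0 < s) :
    IntegrableOn (fun t : ℝ => t ^ s) (Ioo (0:ℝ) 1) := by
  apply (ContinuousOn.integrableOn_compact isCompact_Icc ?_).mono_set Ioo_subset_Icc_self
  exact (Real.continuous_rpow_const hs.le).continuousOn

lemma cube_eval (n : ℕ) (s : ℝ) (hs : 0 < s) :
    ∫ x : Fin n → ℝ in Set.univ.pi fun _ => Ioo (0:ℝ) 1, (∏ i, x i) ^ s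
      = (1/(s+1))^n := by
  have hC : MeasurableSet (Set.univ.pi fun _ : Fin n => Ioo (0:ℝ) 1) :=
    MeasurableSet.univ_pi fun i => measurableSet_Ioo
  set g : ℝ → ℝ := (Ioo (0:ℝ) 1).indicator (fun t => t ^ s) with hg
  have key : ∀ x : Fin n → ℝ,
      (Set.univ.pi fun _ : Fin n => Ioo (0:ℝ) 1).indicator (fun x => (∏ i, x i) ^ s) x
        = ∏ i, g (x i) := by
    intro x
    by_cases hx : x ∈ Set.univ.pi fun _ : Fin n => Ioo (0:ℝ) 1
    · rw [Set.indicator_of_mem hx]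
      have hmem : ∀ i, x i ∈ Ioo (0:ℝ) 1 := fun i => hx i (Set.mem_univ i)
      rw [← Real.finset_prod_rpow _ _ (fun i _ => (hmem i).1.le)]
      exact Finset.prod_congr rfl fun i _ =>
        (Set.indicator_of_mem (hmem i) (fun t : ℝ => t ^ s)).symm
    · rw [Set.indicator_of_notMem hx]
      have hx' : ∃ i, x i ∉ Ioo (0:ℝ) 1 := by
        by_contra hcon
        push_neg at hcon
        exact hx fun i _ => hcon i
      obtain ⟨i, hi⟩ := hx'
      exact (Finset.prod_eq_zero (Finset.mem_univ i)
        (Set.indicator_of_notMem hi (fun t : ℝ => t ^ s))).symm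
  rw [← integral_indicator hC]
  calc ∫ x : Fin n → ℝ, (Set.univ.pi fun _ : Fin n => Ioo (0:ℝ) 1).indicator
          (fun x => (∏ i, x i) ^ s) x
      = ∫ x : Fin n → ℝ, ∏ i, g (x i) := by simp_rw [key]
    _ = (∫ t : ℝ, g t) ^ Fintype.card (Fin n) := integral_fintype_prod_eq_pow (ι := Fin n) g
    _ = (1/(s+1))^n := by
        rw [hg, integral_indicator measurableSet_Ioo, one_dim_eval s hs, Fintype.card_fin]

lemma gamma_eval (k : ℕ) (hk : 1 ≤ k) (p : ℝ) (hp : 0 < p) (hlp : Real.log p < 0) :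
    (-1:ℝ)^k / (Real.log p)^k
      = ((Nat.factorial (k-1) : ℝ))⁻¹ * ∫ s in Ioi (0:ℝ), s ^ ((k:ℝ)-1) * p ^ s := by
  set r : ℝ := -Real.log p with hr
  have hr0 : 0 < r := by simp only [hr]; linarith
  have hk0 : (0:ℝ) < (k:ℝ) := by exact_mod_cast hk
  have hγ := integral_rpow_mul_exp_neg_mul_Ioi (a := (k:ℝ)) (r := r) hk0 hr0
  have hcongr : ∫ t in Ioi (0:ℝ), t ^ ((k:ℝ)-1) * exp (-(r*t))
      = ∫ s in Ioi (0:ℝ), s ^ ((k:ℝ)-1) * p ^ s := by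
    refine setIntegral_congr_fun measurableSet_Ioi fun t ht => ?_
    rw [Real.rpow_def_of_pos hp]
    congr 1
    rw [hr]; ring_nf
  have hGam : Real.Gamma (k:ℝ) = (Nat.factorial (k-1) : ℝ) := by
    have hcast : (k:ℝ) = ((k-1:ℕ):ℝ) + 1 := by
      rw [Nat.cast_sub hk, Nat.cast_one]; ring
    rw [hcast, Real.Gamma_nat_eq_factorial]
  rw [← hcongr, hγ, hGam]
  have hne : Real.log p ≠ 0 := ne_of_lt hlp
  have hlhs : (-1:ℝ)^k / (Real.log p)^k = (1/r)^k := by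
    have h1r : (1:ℝ)/r = (-1)/Real.log p := by rw [hr]; field_simp
    rw [h1r, div_pow]
  rw [hlhs, ← Real.rpow_natCast (1/r) k]
  have hfne : (Nat.factorial (k-1) : ℝ) ≠ 0 := by positivity
  field_simp

theorem cube_integral_neg_log_pow_k (n k : ℕ) (hk : 1 ≤ k) (hkn : k < n) :
    (∫ x : Fin n → ℝ in Set.univ.pi fun _ => Set.Ioo (0:ℝ) 1,
        (-1 : ℝ) ^ k / (Real.log (∏ i, x i)) ^ k)
      = 1 / ∏ j ∈ Finset.range k, ((n : ℝ) - 1 - (j : ℝ)) := by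
  have hn0 : 0 < n := by omega
  haveI hne : Nonempty (Fin n) := ⟨⟨0, hn0⟩⟩
  set C : Set (Fin n → ℝ) := Set.univ.pi fun _ => Set.Ioo (0:ℝ) 1 with hCdef
  have hC : MeasurableSet C := MeasurableSet.univ_pi fun i => measurableSet_Ioo
  have hk1 : (0:ℝ) ≤ (k:ℝ) - 1 := by
    have : (1:ℝ) ≤ (k:ℝ) := by exact_mod_cast hk
    linarith
  set F : (Fin n → ℝ) → ℝ → ℝ := fun x s => s ^ ((k:ℝ)-1) * (∏ i, x i) ^ s with hF
  set c : ℝ := (Nat.factorial (k-1) : ℝ) with hc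
  have hc0 : c ≠ 0 := by rw [hc]; positivity
  have hpx : ∀ x ∈ C, 0 < ∏ i, x i ∧ Real.log (∏ i, x i) < 0 := by
    intro x hx
    have hmem : ∀ i, x i ∈ Ioo (0:ℝ) 1 := fun i => hx i (Set.mem_univ i)
    have hp0 : 0 < ∏ i, x i := Finset.prod_pos fun i _ => (hmem i).1
    refine ⟨hp0, ?_⟩
    rw [Real.log_prod (fun i _ => (hmem i).1.ne')]
    have := Finset.sum_lt_sum_of_nonempty (Finset.univ_nonempty (α := Fin n))
      (g := fun _ => (0:ℝ)) (fun i _ => Real.log_neg (hmem i).1 (hmem i).2)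
    simpa using this
  have hfin : volume C ≠ ⊤ := by
    rw [hCdef, volume_pi_pi]
    simp [Real.volume_Ioo]
  have hsec : ∀ s : ℝ, 0 < s → Integrable (fun x => F x s) (volume.restrict C) := by
    intro s hs
    have hmeas : AEStronglyMeasurable (fun x => F x s) (volume.restrict C) := by
      apply Continuous.aestronglyMeasurable
      apply continuous_const.mul
      exact (Real.continuous_rpow_const hs.le).comp
        (continuous_finset_prod Finset.univ fun i _ => continuous_apply i)
    apply Integrable.mono' (g := fun _ => s ^ ((k:ℝ)-1))
      (integrableOn_const (C := s ^ ((k:ℝ)-1)) hfin) hmeas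
    filter_upwards [ae_restrict_mem hC] with x hx
    have hmem : ∀ i, x i ∈ Ioo (0:ℝ) 1 := fun i => hx i (Set.mem_univ i)
    have hp0 : (0:ℝ) ≤ ∏ i, x i := (Finset.prod_pos fun i _ => (hmem i).1).le
    have hp1 : ∏ i, x i ≤ 1 :=
      Finset.prod_le_one (fun i _ => (hmem i).1.le) (fun i _ => (hmem i).2.le)
    rw [hF]
    simp only []
    rw [norm_mul, norm_of_nonneg (Real.rpow_nonneg hs.le _),
      norm_of_nonneg (Real.rpow_nonneg hp0 _)]
    calc s ^ ((k:ℝ)-1) * (∏ i, x i) ^ s ≤ s ^ ((k:ℝ)-1) * 1 :=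
          mul_le_mul_of_nonneg_left (Real.rpow_le_one hp0 hp1 hs.le)
            (Real.rpow_nonneg hs.le _)
      _ = s ^ ((k:ℝ)-1) := mul_one _
  have hmeasF : AEStronglyMeasurable (Function.uncurry F)
      ((volume.restrict C).prod (volume.restrict (Ioi (0:ℝ)))) := by
    rw [Measure.prod_restrict]
    apply ContinuousOn.aestronglyMeasurable ?_ (hC.prod measurableSet_Ioi)
    apply ContinuousOn.mul
    · exact ((Real.continuous_rpow_const hk1).comp continuous_snd).continuousOn
    · intro q hq
      have hq1 : q.1 ∈ C := hq.1
      have hp0 : 0 < ∏ i, q.1 i :=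
        Finset.prod_pos fun i _ => (hq1 i (Set.mem_univ i)).1
      apply ContinuousAt.continuousWithinAt
      exact ContinuousAt.rpow
        (((continuous_finset_prod Finset.univ fun i _ => continuous_apply i).comp
          continuous_fst).continuousAt)
        continuous_snd.continuousAt (Or.inl hp0.ne')
  have hpow : ∀ s : ℝ, 0 < s → (1+s) ^ (-(n:ℝ)) = ((1:ℝ)/(s+1))^n := by
    intro s hs
    rw [Real.rpow_neg (by linarith), Real.rpow_natCast, one_div, inv_pow, add_comm s 1]
  have hnorm : Integrable (fun s => ∫ x in C, ‖F x s‖) (volume.restrict (Ioi (0:ℝ))) := by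
    apply Integrable.congr (key_integrable n k hk hkn)
    filter_upwards [ae_restrict_mem measurableSet_Ioi] with s hs
    rw [mem_Ioi] at hs
    have h1 : ∫ x in C, ‖F x s‖ = ∫ x in C, F x s := by
      refine setIntegral_congr_fun hC fun x hx => ?_
      have hmem : ∀ i, x i ∈ Ioo (0:ℝ) 1 := fun i => hx i (Set.mem_univ i)
      have hp0 : (0:ℝ) ≤ ∏ i, x i := (Finset.prod_pos fun i _ => (hmem i).1).le
      exact norm_of_nonneg
        (mul_nonneg (Real.rpow_nonneg hs.le _) (Real.rpow_nonneg hp0 _))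
    rw [h1, hF]
    simp only []
    rw [integral_const_mul, cube_eval n s hs, hpow s hs]
  have hsecae : ∀ᵐ s ∂(volume.restrict (Ioi (0:ℝ))),
      Integrable (fun x => F x s) (volume.restrict C) := by
    filter_upwards [ae_restrict_mem measurableSet_Ioi] with s hs
    exact hsec s hs
  have hInt : Integrable (Function.uncurry F)
      ((volume.restrict C).prod (volume.restrict (Ioi (0:ℝ)))) :=
    (integrable_prod_iff' hmeasF).2 ⟨hsecae, hnorm⟩
  have hswap := integral_integral_swap hInt
  calc (∫ x : Fin n → ℝ in C, (-1 : ℝ) ^ k / (Real.log (∏ i, x i)) ^ k)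
      = ∫ x : Fin n → ℝ in C, c⁻¹ * ∫ s in Ioi (0:ℝ), F x s := by
        refine setIntegral_congr_fun hC fun x hx => ?_
        exact gamma_eval k hk _ (hpx x hx).1 (hpx x hx).2
    _ = c⁻¹ * ∫ x : Fin n → ℝ in C, ∫ s in Ioi (0:ℝ), F x s := integral_const_mul _ _
    _ = c⁻¹ * ∫ s in Ioi (0:ℝ), ∫ x : Fin n → ℝ in C, F x s := by rw [hswap]
    _ = c⁻¹ * ∫ s in Ioi (0:ℝ), s ^ ((k:ℝ)-1) * (1+s) ^ (-(n:ℝ)) := by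
        congr 1
        refine setIntegral_congr_fun measurableSet_Ioi fun s hs => ?_
        rw [mem_Ioi] at hs
        rw [hF]
        simp only []
        rw [integral_const_mul, cube_eval n s hs, hpow s hs]
    _ = c⁻¹ * (c / ∏ j ∈ Finset.range k, ((n : ℝ) - 1 - (j : ℝ))) := by
        rw [key_value n k hk hkn]
    _ = 1 / ∏ j ∈ Finset.range k, ((n : ℝ) - 1 - (j : ℝ)) := by
        field_simp
end

section
/- ∫_0^1 ∫_0^1 ∫_0^1 x³ y² z / (−log(x y² z³)) dx dy dz = (1/50)·log(2187/512). -/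
open MeasureTheory Real Set Filter Topology

/-- For `0 < u < 1`, `1/(-log u) = ∫_{t>0} u^t dt` (written with `exp`). -/
lemma rep_aux {u : ℝ} (h0 : 0 < u) (h1 : u < 1) :
    (1:ℝ) / (-Real.log u) = ∫ t in Ioi (0:ℝ), Real.exp (t * Real.log u) := by
  have hb : 0 < -Real.log u := neg_pos.mpr (Real.log_neg h0 h1)
  have h : (fun t : ℝ => Real.exp (t * Real.log u))
      = fun t : ℝ => Real.exp (-(t * (-Real.log u))) := by
    funext t; ring_nf
  rw [h]
  have := integral_comp_mul_right_Ioi (fun x : ℝ => Real.exp (-x)) 0 hb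
  simp only [zero_mul, smul_eq_mul] at this
  rw [this, integral_exp_neg_Ioi_zero, mul_one, one_div]

/-- Core swap lemma. -/
lemma swap_step (m : ℕ) (n : ℝ) (hn : 0 < n) (g : ℝ → ℝ) (hg : Measurable g)
    (hg0 : ∀ t ∈ Ioi (0:ℝ), 0 ≤ g t) (hg1 : ∀ t ∈ Ioi (0:ℝ), g t ≤ 1)
    (hgint : IntegrableOn g (Ioi 0)) :
    (∫ s in Ioo (0:ℝ) 1, s ^ m * ∫ t in Ioi (0:ℝ), Real.exp (n * t * Real.log s) * g t)
      = ∫ t in Ioi (0:ℝ), g t / (n * t + m + 1) := by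
  have hmeas : Measurable (fun p : ℝ × ℝ =>
      p.1 ^ m * (Real.exp (n * p.2 * Real.log p.1) * g p.2)) := by
    exact (measurable_fst.pow_const m).mul
      ((Real.measurable_exp.comp ((measurable_const.mul measurable_snd).mul
        (Real.measurable_log.comp measurable_fst))).mul (hg.comp measurable_snd))
  have hInt : Integrable (Function.uncurry fun s t : ℝ =>
      s ^ m * (Real.exp (n * t * Real.log s) * g t))
      ((volume.restrict (Ioo (0:ℝ) 1)).prod (volume.restrict (Ioi (0:ℝ)))) := by
    have hbd : Integrable (fun p : ℝ × ℝ => (1:ℝ) * g p.2)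
        ((volume.restrict (Ioo (0:ℝ) 1)).prod (volume.restrict (Ioi (0:ℝ)))) :=
      (integrable_const 1).mul_prod hgint
    refine hbd.mono' hmeas.aestronglyMeasurable ?_
    rw [Measure.prod_restrict]
    filter_upwards [ae_restrict_mem (measurableSet_Ioo.prod measurableSet_Ioi)]
    rintro ⟨s, t⟩ ⟨hs, ht⟩
    have hs0 : (0:ℝ) < s := hs.1
    have hlog : Real.log s < 0 := Real.log_neg hs0 hs.2
    have he : Real.exp (n * t * Real.log s) ≤ 1 :=
      Real.exp_le_one_iff.2 (by nlinarith [mul_nonneg (mul_nonneg hn.le (le_of_lt (show (0:ℝ) < t from ht))) (neg_nonneg.mpr hlog.le)])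
    have hsm : s ^ m ≤ 1 := pow_le_one₀ hs0.le hs.2.le
    have h0g : 0 ≤ g t := hg0 t ht
    have h1g : g t ≤ 1 := hg1 t ht
    have hepos : 0 ≤ Real.exp (n * t * Real.log s) := (Real.exp_pos _).le
    simp only [Function.uncurry_apply_pair]
    rw [Real.norm_eq_abs, abs_of_nonneg (mul_nonneg (pow_nonneg hs0.le m) (mul_nonneg hepos h0g))]
    calc s ^ m * (Real.exp (n * t * Real.log s) * g t)
        ≤ 1 * (1 * g t) := by
          apply mul_le_mul hsm (mul_le_mul he le_rfl h0g (by norm_num)) (by positivity)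
            (by norm_num)
      _ = 1 * g t := by ring
  have hswap :
      (∫ s in Ioo (0:ℝ) 1, ∫ t in Ioi (0:ℝ),
          s ^ m * (Real.exp (n * t * Real.log s) * g t))
        = ∫ t in Ioi (0:ℝ), ∫ s in Ioo (0:ℝ) 1,
            s ^ m * (Real.exp (n * t * Real.log s) * g t) :=
    integral_integral_swap hInt
  have hLHS : (∫ s in Ioo (0:ℝ) 1, s ^ m * ∫ t in Ioi (0:ℝ),
      Real.exp (n * t * Real.log s) * g t)
      = ∫ s in Ioo (0:ℝ) 1, ∫ t in Ioi (0:ℝ),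
          s ^ m * (Real.exp (n * t * Real.log s) * g t) := by
    refine setIntegral_congr_fun measurableSet_Ioo fun s _ => ?_
    rw [MeasureTheory.integral_const_mul]
  rw [hLHS, hswap]
  refine setIntegral_congr_fun measurableSet_Ioi fun t ht => ?_
  have hpt : ∀ s ∈ Ioo (0:ℝ) 1,
      s ^ m * (Real.exp (n * t * Real.log s) * g t)
        = s ^ ((m : ℝ) + n * t) * g t := by
    intro s hs
    have hs0 : (0:ℝ) < s := hs.1
    rw [Real.rpow_add hs0, Real.rpow_natCast,
      Real.rpow_def_of_pos hs0]
    ring_nf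
  rw [setIntegral_congr_fun measurableSet_Ioo hpt, integral_mul_const]
  have hm : (-1:ℝ) < (m : ℝ) + n * t := by
    have : (0:ℝ) ≤ (m:ℝ) := Nat.cast_nonneg m
    nlinarith [ht.out]
  have hval : (∫ s in Ioo (0:ℝ) 1, s ^ ((m : ℝ) + n * t)) = ((m : ℝ) + n * t + 1)⁻¹ := by
    rw [← MeasureTheory.integral_Ioc_eq_integral_Ioo,
      ← intervalIntegral.integral_of_le zero_le_one,
      integral_rpow (Or.inl hm)]
    rw [Real.one_rpow, Real.zero_rpow (ne_of_gt (by linarith)), sub_zero, one_div]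
  rw [hval]
  rw [div_eq_mul_inv, mul_comm]
  ring_nf

lemma g_exp_integrable {L : ℝ} (hL : L < 0) :
    IntegrableOn (fun t : ℝ => Real.exp (t * L)) (Ioi 0) := by
  have h : (fun t : ℝ => Real.exp (t * L)) = fun t : ℝ => Real.exp (-(-L) * t) := by
    funext t; ring_nf
  rw [h]
  exact exp_neg_integrableOn_Ioi 0 (by linarith)

/-- Innermost integral. -/
lemma x_int {y z : ℝ} (hy : y ∈ Ioo (0:ℝ) 1) (hz : z ∈ Ioo (0:ℝ) 1) :
    (∫ x in (0:ℝ)..1, x ^ 3 * y ^ 2 * z / (-Real.log (x * y ^ 2 * z ^ 3)))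
      = y ^ 2 * z * ∫ t in Ioi (0:ℝ),
          Real.exp (t * Real.log (y ^ 2 * z ^ 3)) / (t + 4) := by
  have hy0 := hy.1; have hy1 := hy.2; have hz0 := hz.1; have hz1 := hz.2
  have hc0 : 0 < y ^ 2 * z ^ 3 := by positivity
  have hy2 : y ^ 2 < 1 := by nlinarith
  have hz3 : z ^ 3 < 1 := by nlinarith [sq_nonneg z, mul_pos hz0 hz0]
  have hc1 : y ^ 2 * z ^ 3 < 1 := by
    nlinarith [pow_pos hy0 2, pow_pos hz0 3]
  have hL : Real.log (y ^ 2 * z ^ 3) < 0 := Real.log_neg hc0 hc1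
  set L := Real.log (y ^ 2 * z ^ 3) with hLdef
  rw [intervalIntegral.integral_of_le zero_le_one,
    MeasureTheory.integral_Ioc_eq_integral_Ioo]
  have hpt : ∀ x ∈ Ioo (0:ℝ) 1,
      x ^ 3 * y ^ 2 * z / (-Real.log (x * y ^ 2 * z ^ 3))
        = (y ^ 2 * z) * (x ^ 3 * ∫ t in Ioi (0:ℝ),
            Real.exp (1 * t * Real.log x) * Real.exp (t * L)) := by
    intro x hx
    have hx0 := hx.1; have hx1 := hx.2
    have hv0 : 0 < x * (y ^ 2 * z ^ 3) := by positivity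
    have hv1 : x * (y ^ 2 * z ^ 3) < 1 := by nlinarith
    have hrep := rep_aux hv0 hv1
    have hlogv : Real.log (x * (y ^ 2 * z ^ 3)) = Real.log x + L := by
      rw [Real.log_mul (ne_of_gt hx0) (ne_of_gt hc0)]
    have hfun : (fun t : ℝ => Real.exp (t * Real.log (x * (y ^ 2 * z ^ 3))))
        = fun t : ℝ => Real.exp (1 * t * Real.log x) * Real.exp (t * L) := by
      funext t
      rw [hlogv, ← Real.exp_add]
      ring_nf
    rw [mul_assoc x (y^2) (z^3), div_eq_mul_one_div, hrep, hfun]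
    ring
  rw [setIntegral_congr_fun measurableSet_Ioo hpt, MeasureTheory.integral_const_mul]
  have hmeasg : Measurable (fun t : ℝ => Real.exp (t * L)) :=
    Real.measurable_exp.comp (measurable_id.mul_const L)
  have key := swap_step 3 1 one_pos (fun t => Real.exp (t * L)) hmeasg
    (fun t _ => (Real.exp_pos _).le)
    (fun t ht => Real.exp_le_one_iff.2 (by nlinarith [ht.out]))
    (g_exp_integrable hL)
  rw [key]
  congr 1
  refine setIntegral_congr_fun measurableSet_Ioi fun t _ => ?_
  push_cast
  ring_nf

/-- Middle integral. -/
lemma y_int {z : ℝ} (hz : z ∈ Ioo (0:ℝ) 1) :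
    (∫ y in (0:ℝ)..1, y ^ 2 * z * ∫ t in Ioi (0:ℝ),
        Real.exp (t * Real.log (y ^ 2 * z ^ 3)) / (t + 4))
      = z * ∫ t in Ioi (0:ℝ),
          Real.exp (t * (3 * Real.log z)) / ((t + 4) * (2 * t + 3)) := by
  have hz0 := hz.1; have hz1 := hz.2
  have hLz : Real.log z < 0 := Real.log_neg hz0 hz1
  set g : ℝ → ℝ := fun t => Real.exp (t * (3 * Real.log z)) / (t + 4) with hgdef
  have hmeasg : Measurable g :=
    (Real.measurable_exp.comp (measurable_id.mul_const _)).div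
      (measurable_id.add_const 4)
  rw [intervalIntegral.integral_of_le zero_le_one,
    MeasureTheory.integral_Ioc_eq_integral_Ioo]
  have hpt : ∀ y ∈ Ioo (0:ℝ) 1,
      y ^ 2 * z * ∫ t in Ioi (0:ℝ),
          Real.exp (t * Real.log (y ^ 2 * z ^ 3)) / (t + 4)
        = z * (y ^ 2 * ∫ t in Ioi (0:ℝ),
            Real.exp (2 * t * Real.log y) * g t) := by
    intro y hy
    have hy0 := hy.1
    have hfun : (fun t : ℝ => Real.exp (t * Real.log (y ^ 2 * z ^ 3)) / (t + 4))
        = fun t : ℝ => Real.exp (2 * t * Real.log y) * g t := by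
      funext t
      have hlog : Real.log (y ^ 2 * z ^ 3) = 2 * Real.log y + 3 * Real.log z := by
        rw [Real.log_mul (by positivity) (by positivity), Real.log_pow, Real.log_pow]
        push_cast; ring
      rw [hgdef]
      simp only
      rw [hlog, show t * (2 * Real.log y + 3 * Real.log z)
          = 2 * t * Real.log y + t * (3 * Real.log z) by ring, Real.exp_add,
        mul_div_assoc]
    rw [hfun]
    ring
  rw [setIntegral_congr_fun measurableSet_Ioo hpt, MeasureTheory.integral_const_mul]
  have key := swap_step 2 2 two_pos g hmeasg
    (fun t ht => by
      have : (0:ℝ) < t := ht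
      positivity)
    (fun t ht => by
      have ht0 : (0:ℝ) < t := ht
      rw [hgdef]
      simp only
      rw [div_le_one (by linarith)]
      have : Real.exp (t * (3 * Real.log z)) ≤ 1 :=
        Real.exp_le_one_iff.2 (by nlinarith)
      linarith)
    (by
      refine (g_exp_integrable (show 3 * Real.log z < 0 by linarith)).mono'
        hmeasg.aestronglyMeasurable ?_
      filter_upwards [ae_restrict_mem measurableSet_Ioi] with t ht
      have ht0 : (0:ℝ) < t := ht
      rw [hgdef, Real.norm_eq_abs]
      simp only
      rw [abs_of_nonneg (by positivity)]
      rw [div_le_iff₀ (by linarith)]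
      nlinarith [Real.exp_pos (t * (3 * Real.log z))])
  rw [key]
  congr 1
  refine setIntegral_congr_fun measurableSet_Ioi fun t ht => ?_
  rw [hgdef]
  simp only
  rw [div_div]
  push_cast
  ring_nf

/-- Outer integral. -/
lemma z_int :
    (∫ z in (0:ℝ)..1, z * ∫ t in Ioi (0:ℝ),
        Real.exp (t * (3 * Real.log z)) / ((t + 4) * (2 * t + 3)))
      = ∫ t in Ioi (0:ℝ), 1 / ((t + 4) * (2 * t + 3) * (3 * t + 2)) := by
  set g : ℝ → ℝ := fun t => 1 / ((t + 4) * (2 * t + 3)) with hgdef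
  have hmeasg : Measurable g :=
    measurable_const.div ((measurable_id.add_const 4).mul
      ((measurable_id.const_mul 2).add_const 3))
  rw [intervalIntegral.integral_of_le zero_le_one,
    MeasureTheory.integral_Ioc_eq_integral_Ioo]
  have hpt : ∀ z ∈ Ioo (0:ℝ) 1,
      z * ∫ t in Ioi (0:ℝ),
          Real.exp (t * (3 * Real.log z)) / ((t + 4) * (2 * t + 3))
        = z ^ 1 * ∫ t in Ioi (0:ℝ), Real.exp (3 * t * Real.log z) * g t := by
    intro z hz
    have hfun : (fun t : ℝ => Real.exp (t * (3 * Real.log z)) / ((t + 4) * (2 * t + 3)))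
        = fun t : ℝ => Real.exp (3 * t * Real.log z) * g t := by
      funext t
      rw [hgdef]
      simp only
      rw [show t * (3 * Real.log z) = 3 * t * Real.log z by ring,
        div_eq_mul_one_div]
    rw [hfun, pow_one]
  rw [setIntegral_congr_fun measurableSet_Ioo hpt]
  have key := swap_step 1 3 three_pos g hmeasg
    (fun t ht => by
      have : (0:ℝ) < t := ht
      positivity)
    (fun t ht => by
      have ht0 : (0:ℝ) < t := ht
      rw [hgdef]
      simp only
      rw [div_le_one (by nlinarith)]
      nlinarith)
    (by
      refine (integrable_inv_one_add_sq.integrableOn).mono'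
        hmeasg.aestronglyMeasurable ?_
      filter_upwards [ae_restrict_mem measurableSet_Ioi] with t ht
      have ht0 : (0:ℝ) < t := ht
      rw [hgdef, Real.norm_eq_abs]
      simp only
      rw [abs_of_nonneg (by positivity), one_div]
      exact inv_anti₀ (by positivity) (by nlinarith))
  rw [key]
  refine setIntegral_congr_fun measurableSet_Ioi fun t ht => ?_
  rw [hgdef]
  simp only
  rw [div_div]
  push_cast
  ring_nf

lemma eval_int :
    (∫ t in Ioi (0:ℝ), 1 / ((t + 4) * (2 * t + 3) * (3 * t + 2)))
      = (1 / 50) * Real.log (2187 / 512) := by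
  set F : ℝ → ℝ := fun t =>
    (1 / 50) * (Real.log (t + 4) - 4 * Real.log (2 * t + 3) + 3 * Real.log (3 * t + 2))
    with hFdef
  have hderiv : ∀ t ∈ Ici (0:ℝ), HasDerivAt F
      (1 / ((t + 4) * (2 * t + 3) * (3 * t + 2))) t := by
    intro t ht
    have ht0 : (0:ℝ) ≤ t := ht
    have h4 : t + 4 ≠ 0 := by positivity
    have h3 : 2 * t + 3 ≠ 0 := by positivity
    have h2 : 3 * t + 2 ≠ 0 := by positivity
    have d1 : HasDerivAt (fun t : ℝ => Real.log (t + 4)) (1 / (t + 4)) t := by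
      simpa using ((hasDerivAt_id t).add_const 4).log h4
    have d2 : HasDerivAt (fun t : ℝ => Real.log (2 * t + 3)) (2 / (2 * t + 3)) t := by
      simpa using (((hasDerivAt_id t).const_mul 2).add_const 3).log h3
    have d3 : HasDerivAt (fun t : ℝ => Real.log (3 * t + 2)) (3 / (3 * t + 2)) t := by
      simpa using (((hasDerivAt_id t).const_mul 3).add_const 2).log h2
    have := ((d1.sub (d2.const_mul 4)).add (d3.const_mul 3)).const_mul (1 / 50 : ℝ)
    refine this.congr_deriv ?_
    field_simp
    ring
  have hint : IntegrableOn
      (fun t : ℝ => 1 / ((t + 4) * (2 * t + 3) * (3 * t + 2))) (Ioi 0) := by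
    refine (integrable_inv_one_add_sq.integrableOn).mono'
      ((measurable_const.div (((measurable_id.add_const 4).mul
        ((measurable_id.const_mul 2).add_const 3)).mul
        ((measurable_id.const_mul 3).add_const 2))).aestronglyMeasurable) ?_
    filter_upwards [ae_restrict_mem measurableSet_Ioi] with t ht
    have ht0 : (0:ℝ) < t := ht
    rw [Real.norm_eq_abs, abs_of_nonneg (by positivity), one_div]
    exact inv_anti₀ (by positivity) (by nlinarith)
  have h12 : Tendsto (fun t : ℝ => (t + 4) / (2 * t + 3)) atTop (𝓝 (1 / 2)) := by
    have h : (fun t : ℝ => (t + 4) / (2 * t + 3))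
        =ᶠ[atTop] fun t : ℝ => (1 + 4 * t⁻¹) / (2 + 3 * t⁻¹) := by
      filter_upwards [eventually_gt_atTop (0:ℝ)] with t ht
      field_simp
    have h1 : Tendsto (fun t : ℝ => (1:ℝ) + 4 * t⁻¹) atTop (𝓝 1) := by
      simpa using tendsto_const_nhds.add (tendsto_inv_atTop_zero.const_mul (4:ℝ))
    have h2 : Tendsto (fun t : ℝ => (2:ℝ) + 3 * t⁻¹) atTop (𝓝 2) := by
      simpa using tendsto_const_nhds.add (tendsto_inv_atTop_zero.const_mul (3:ℝ))
    exact Tendsto.congr' h.symm (h1.div h2 two_ne_zero)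
  have h32 : Tendsto (fun t : ℝ => (3 * t + 2) / (2 * t + 3)) atTop (𝓝 (3 / 2)) := by
    have h : (fun t : ℝ => (3 * t + 2) / (2 * t + 3))
        =ᶠ[atTop] fun t : ℝ => (3 + 2 * t⁻¹) / (2 + 3 * t⁻¹) := by
      filter_upwards [eventually_gt_atTop (0:ℝ)] with t ht
      field_simp
    have h1 : Tendsto (fun t : ℝ => (3:ℝ) + 2 * t⁻¹) atTop (𝓝 3) := by
      simpa using tendsto_const_nhds.add (tendsto_inv_atTop_zero.const_mul (2:ℝ))
    have h2 : Tendsto (fun t : ℝ => (2:ℝ) + 3 * t⁻¹) atTop (𝓝 2) := by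
      simpa using tendsto_const_nhds.add (tendsto_inv_atTop_zero.const_mul (3:ℝ))
    exact Tendsto.congr' h.symm (h1.div h2 two_ne_zero)
  have hlog12 : Tendsto (fun t : ℝ => Real.log ((t + 4) / (2 * t + 3))) atTop
      (𝓝 (Real.log (1 / 2))) :=
    ((Real.continuousAt_log (by norm_num)).tendsto).comp h12
  have hlog32 : Tendsto (fun t : ℝ => Real.log ((3 * t + 2) / (2 * t + 3))) atTop
      (𝓝 (Real.log (3 / 2))) :=
    ((Real.continuousAt_log (by norm_num)).tendsto).comp h32
  have htends : Tendsto F atTop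
      (𝓝 ((1 / 50) * (Real.log (1 / 2) + 3 * Real.log (3 / 2)))) := by
    have heq : (fun t : ℝ =>
        (1 / 50) * (Real.log ((t + 4) / (2 * t + 3))
          + 3 * Real.log ((3 * t + 2) / (2 * t + 3)))) =ᶠ[atTop] F := by
      filter_upwards [eventually_gt_atTop (0:ℝ)] with t ht
      rw [hFdef]
      simp only
      rw [Real.log_div (by positivity) (by positivity),
        Real.log_div (by positivity) (by positivity)]
      ring
    exact Tendsto.congr' heq
      ((hlog12.add (hlog32.const_mul 3)).const_mul (1 / 50 : ℝ))
  rw [integral_Ioi_of_hasDerivAt_of_tendsto' hderiv hint htends]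
  have hF0 : F 0 = (1 / 50) * (Real.log 4 - 4 * Real.log 3 + 3 * Real.log 2) := by
    rw [hFdef]; norm_num
  rw [hF0]
  have l4 : Real.log 4 = 2 * Real.log 2 := by
    rw [show (4:ℝ) = 2 ^ 2 by norm_num, Real.log_pow]; push_cast; ring
  have l12 : Real.log (1 / 2 : ℝ) = -Real.log 2 := by
    rw [one_div, Real.log_inv]
  have l32 : Real.log (3 / 2 : ℝ) = Real.log 3 - Real.log 2 :=
    Real.log_div (by norm_num) (by norm_num)
  have lfin : Real.log (2187 / 512 : ℝ) = 7 * Real.log 3 - 9 * Real.log 2 := by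
    rw [Real.log_div (by norm_num) (by norm_num),
      show (2187:ℝ) = 3 ^ 7 by norm_num, show (512:ℝ) = 2 ^ 9 by norm_num,
      Real.log_pow, Real.log_pow]
    push_cast; ring
  rw [l4, l12, l32, lfin]
  ring

theorem triple_integral_example :
    (∫ z in (0:ℝ)..1, ∫ y in (0:ℝ)..1, ∫ x in (0:ℝ)..1,
        x ^ 3 * y ^ 2 * z / (-Real.log (x * y ^ 2 * z ^ 3)))
      = (1 / 50) * Real.log (2187 / 512) := by
  have hz' : ∀ z ∈ Ioo (0:ℝ) 1,
      (∫ y in (0:ℝ)..1, ∫ x in (0:ℝ)..1,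
          x ^ 3 * y ^ 2 * z / (-Real.log (x * y ^ 2 * z ^ 3)))
        = z * ∫ t in Ioi (0:ℝ),
            Real.exp (t * (3 * Real.log z)) / ((t + 4) * (2 * t + 3)) := by
    intro z hz
    have hy' : (∫ y in (0:ℝ)..1, ∫ x in (0:ℝ)..1,
        x ^ 3 * y ^ 2 * z / (-Real.log (x * y ^ 2 * z ^ 3)))
        = ∫ y in (0:ℝ)..1, y ^ 2 * z * ∫ t in Ioi (0:ℝ),
            Real.exp (t * Real.log (y ^ 2 * z ^ 3)) / (t + 4) := by
      rw [intervalIntegral.integral_of_le zero_le_one,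
        MeasureTheory.integral_Ioc_eq_integral_Ioo,
        intervalIntegral.integral_of_le zero_le_one,
        MeasureTheory.integral_Ioc_eq_integral_Ioo]
      exact setIntegral_congr_fun measurableSet_Ioo fun y hy => x_int hy hz
    rw [hy', y_int hz]
  rw [intervalIntegral.integral_of_le zero_le_one,
    MeasureTheory.integral_Ioc_eq_integral_Ioo,
    setIntegral_congr_fun measurableSet_Ioo hz',
    ← MeasureTheory.integral_Ioc_eq_integral_Ioo,
    ← intervalIntegral.integral_of_le zero_le_one,
    z_int, eval_int]
end

section
/- ∫_0^∞ ∫_0^∞ e^{−x−y} sin(x+y) / (2x+y) dx dy = (log 2)/2, and ∫_0^∞ ∫_0^∞ e^{−x−y} cos(x+y) / (2x+y) dx dy = (log 2)/2. -/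
open MeasureTheory Real Set Filter

lemma translate_Ioi' (x : ℝ) (φ : ℝ → ℝ) :
    (∫ u in Set.Ioi x, φ u) = ∫ y in Set.Ioi (0:ℝ), φ (y + x) := by
  rw [← (measurePreserving_add_right volume x).setIntegral_preimage_emb
      (MeasurableEquiv.addRight x).measurableEmbedding φ (Set.Ioi x)]
  congr 1
  ext y
  simp

lemma Ioo_inv_integral' (u : ℝ) (hu : 0 < u) :
    ∫ x in Set.Ioo (0:ℝ) u, (x + u)⁻¹ = Real.log 2 := by
  rw [← integral_Ioc_eq_integral_Ioo, ← intervalIntegral.integral_of_le hu.le,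
    intervalIntegral.integral_comp_add_right (fun t => t⁻¹) u,
    integral_inv_of_pos (by linarith) (by linarith)]
  rw [show (u + u) / (0 + u) = 2 by field_simp; ring]

lemma key_double_integral (g : ℝ → ℝ) (hg : Measurable g) (hb : ∀ u, |g u| ≤ 1) :
    (∫ x in Set.Ioi (0:ℝ), ∫ y in Set.Ioi (0:ℝ),
        Real.exp (-x - y) * g (x + y) / (2 * x + y))
      = (∫ u in Set.Ioi (0:ℝ), Real.exp (-u) * g u) * Real.log 2 := by
  set H : ℝ → ℝ → ℝ := fun x u =>
    Set.indicator (Set.Ioi x) (fun u => Real.exp (-u) * g u / (x + u)) u with hH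
  have hslice : ∀ u : ℝ, (fun x => H x u)
      = Set.indicator (Set.Iio u) (fun x => Real.exp (-u) * g u / (x + u)) := by
    intro u; funext x
    by_cases h : x < u <;>
      simp [hH, Set.indicator_apply, Set.mem_Ioi, Set.mem_Iio, h]
  have hFmeas : Measurable (Function.uncurry H) := by
    have : Function.uncurry H
        = Set.indicator {p : ℝ × ℝ | p.1 < p.2}
            (fun p => Real.exp (-p.2) * g p.2 / (p.1 + p.2)) := by
      funext p
      by_cases h : p.1 < p.2 <;>
        simp [hH, Function.uncurry, Set.indicator_apply, Set.mem_Ioi, h]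
    rw [this]
    exact (((measurable_snd.neg.exp).mul (hg.comp measurable_snd)).div
      (measurable_fst.add measurable_snd)).indicator
      (measurableSet_lt measurable_fst measurable_snd)
  have hsliceInt : ∀ u ∈ Set.Ioi (0:ℝ),
      Integrable (fun x => H x u) (volume.restrict (Set.Ioi 0)) := by
    intro u hu
    rw [hslice u, integrable_indicator_iff measurableSet_Iio, IntegrableOn,
      Measure.restrict_restrict measurableSet_Iio]
    have hset : Set.Iio u ∩ Set.Ioi (0:ℝ) = Set.Ioo 0 u := by
      ext t; simp [Set.mem_Ioo, and_comm]
    rw [hset]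
    have hc : ContinuousOn (fun x : ℝ => Real.exp (-u) * g u / (x + u)) (Set.Icc 0 u) := by
      apply continuousOn_const.div (continuous_id.add continuous_const).continuousOn
      intro x hx
      have h0 : (0:ℝ) < x + u := by have := hx.1; have hu' : (0:ℝ) < u := hu; linarith
      exact h0.ne'
    exact (hc.integrableOn_compact isCompact_Icc).mono_set Set.Ioo_subset_Icc_self
  have hnorm : ∀ u ∈ Set.Ioi (0:ℝ),
      (∫ x in Set.Ioi (0:ℝ), ‖H x u‖) ≤ Real.exp (-u) := by
    intro u hu
    have hu' : (0:ℝ) < u := hu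
    have h1 : (fun x => ‖H x u‖)
        = Set.indicator (Set.Iio u) (fun x => ‖Real.exp (-u) * g u / (x + u)‖) := by
      funext x
      rw [congrFun (hslice u) x]
      exact norm_indicator_eq_indicator_norm _ _
    rw [h1, setIntegral_indicator measurableSet_Iio, Set.Ioi_inter_Iio]
    have hle : ∀ x ∈ Set.Ioo (0:ℝ) u,
        ‖Real.exp (-u) * g u / (x + u)‖ ≤ Real.exp (-u) / u := by
      intro x hx
      have hxu : (0:ℝ) < x + u := by have := hx.1; linarith
      rw [Real.norm_eq_abs, abs_div, abs_mul, abs_exp, abs_of_pos hxu]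
      exact div_le_div₀ (exp_pos _).le
        (mul_le_of_le_one_right (exp_pos _).le (hb u)) hu' (by linarith [hx.1])
    have hIntL : IntegrableOn (fun x => ‖Real.exp (-u) * g u / (x + u)‖)
        (Set.Ioo (0:ℝ) u) := by
      have hc : ContinuousOn (fun x : ℝ => Real.exp (-u) * g u / (x + u)) (Set.Icc 0 u) := by
        apply continuousOn_const.div (continuous_id.add continuous_const).continuousOn
        intro x hx
        have h0 : (0:ℝ) < x + u := by have := hx.1; linarith
        exact h0.ne'
      exact ((hc.norm.integrableOn_compact isCompact_Icc).mono_set Set.Ioo_subset_Icc_self)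
    have hIntR : IntegrableOn (fun _ : ℝ => Real.exp (-u) / u) (Set.Ioo (0:ℝ) u) := by
      refine integrableOn_const ?_
      rw [Real.volume_Ioo]
      exact ENNReal.ofReal_ne_top
    calc (∫ x in Set.Ioo (0:ℝ) u, ‖Real.exp (-u) * g u / (x + u)‖)
        ≤ ∫ _x in Set.Ioo (0:ℝ) u, Real.exp (-u) / u :=
          setIntegral_mono_on hIntL hIntR measurableSet_Ioo hle
      _ = Real.exp (-u) := by
          rw [setIntegral_const, measureReal_def, Real.volume_Ioo, smul_eq_mul,
            ENNReal.toReal_ofReal (by linarith), sub_zero]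
          field_simp
  have hInt : Integrable (Function.uncurry H)
      ((volume.restrict (Set.Ioi 0)).prod (volume.restrict (Set.Ioi 0))) := by
    rw [integrable_prod_iff' hFmeas.aestronglyMeasurable]
    constructor
    · filter_upwards [ae_restrict_mem measurableSet_Ioi] with u hu
      exact hsliceInt u hu
    · have hexp : IntegrableOn (fun u => Real.exp (-u)) (Set.Ioi (0:ℝ)) := by
        simpa using exp_neg_integrableOn_Ioi 0 one_pos
      refine hexp.mono' ?_ ?_
      · exact (hFmeas.norm.stronglyMeasurable.integral_prod_left').aestronglyMeasurable
      · filter_upwards [ae_restrict_mem measurableSet_Ioi] with u hu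
        rw [Real.norm_eq_abs,
          abs_of_nonneg (integral_nonneg fun x => norm_nonneg _)]
        exact hnorm u hu
  have stepA : ∀ x ∈ Set.Ioi (0:ℝ),
      (∫ y in Set.Ioi (0:ℝ), Real.exp (-x - y) * g (x + y) / (2 * x + y))
        = ∫ u in Set.Ioi (0:ℝ), H x u := by
    intro x hx
    have hx' : (0:ℝ) < x := hx
    have h1 : (∫ u in Set.Ioi (0:ℝ), H x u)
        = ∫ u in Set.Ioi x, Real.exp (-u) * g u / (x + u) := by
      rw [hH]
      rw [setIntegral_indicator measurableSet_Ioi]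
      congr 1
      rw [Set.inter_eq_right.2 (Set.Ioi_subset_Ioi hx'.le)]
    rw [h1, translate_Ioi' x (fun u => Real.exp (-u) * g u / (x + u))]
    refine (setIntegral_congr_fun measurableSet_Ioi fun y _hy => ?_).symm
    rw [show -(y + x) = -x - y by ring, show y + x = x + y by ring,
      show x + (x + y) = 2 * x + y by ring]
  have stepC : ∀ u ∈ Set.Ioi (0:ℝ),
      (∫ x in Set.Ioi (0:ℝ), H x u) = Real.exp (-u) * g u * Real.log 2 := by
    intro u hu
    have hu' : (0:ℝ) < u := hu
    rw [show (fun x => H x u) = _ from hslice u,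
      setIntegral_indicator measurableSet_Iio, Set.Ioi_inter_Iio]
    simp_rw [div_eq_mul_inv]
    rw [integral_const_mul, Ioo_inv_integral' u hu']
  calc (∫ x in Set.Ioi (0:ℝ), ∫ y in Set.Ioi (0:ℝ),
          Real.exp (-x - y) * g (x + y) / (2 * x + y))
      = ∫ x in Set.Ioi (0:ℝ), ∫ u in Set.Ioi (0:ℝ), H x u :=
        setIntegral_congr_fun measurableSet_Ioi stepA
    _ = ∫ u in Set.Ioi (0:ℝ), ∫ x in Set.Ioi (0:ℝ), H x u :=
        integral_integral_swap hInt
    _ = ∫ u in Set.Ioi (0:ℝ), Real.exp (-u) * g u * Real.log 2 :=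
        setIntegral_congr_fun measurableSet_Ioi stepC
    _ = (∫ u in Set.Ioi (0:ℝ), Real.exp (-u) * g u) * Real.log 2 :=
        integral_mul_const _ _

lemma exp_neg_sin_integral : ∫ u in Set.Ioi (0:ℝ), Real.exp (-u) * Real.sin u = 1 / 2 := by
  have hexp : IntegrableOn (fun u => Real.exp (-u)) (Set.Ioi (0:ℝ)) := by
    simpa using exp_neg_integrableOn_Ioi 0 one_pos
  have hint : IntegrableOn (fun u => Real.exp (-u) * Real.sin u) (Set.Ioi (0:ℝ)) := by
    refine hexp.mono' ?_ ?_
    · exact ((continuous_exp.comp continuous_neg).mul continuous_sin).aestronglyMeasurable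
    · filter_upwards with u
      rw [norm_mul, Real.norm_eq_abs, Real.norm_eq_abs, abs_exp]
      exact mul_le_of_le_one_right (exp_pos _).le (abs_sin_le_one u)
  have hderiv : ∀ u ∈ Set.Ici (0:ℝ), HasDerivAt
      (fun u => -(Real.exp (-u) * (Real.sin u + Real.cos u)) / 2)
      (Real.exp (-u) * Real.sin u) u := by
    intro u _
    have he : HasDerivAt (fun u : ℝ => Real.exp (-u)) (-Real.exp (-u)) u := by
      simpa [Function.comp_def] using (Real.hasDerivAt_exp (-u)).comp u (hasDerivAt_neg u)
    have hsc : HasDerivAt (fun u : ℝ => Real.sin u + Real.cos u)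
        (Real.cos u - Real.sin u) u := by
      simpa [sub_eq_add_neg, Pi.add_def] using (Real.hasDerivAt_sin u).add (Real.hasDerivAt_cos u)
    have : HasDerivAt (fun u => -(Real.exp (-u) * (Real.sin u + Real.cos u)) / 2)
        (-(-Real.exp (-u) * (Real.sin u + Real.cos u) + Real.exp (-u) * (Real.cos u - Real.sin u)) / 2) u :=
      ((he.mul hsc).neg).div_const 2
    convert this using 1
    ring
  have htend : Tendsto (fun u => -(Real.exp (-u) * (Real.sin u + Real.cos u)) / 2)
      atTop (nhds 0) := by
    apply squeeze_zero_norm _ tendsto_exp_neg_atTop_nhds_zero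
    intro u
    rw [norm_div, norm_neg, norm_mul, Real.norm_eq_abs, abs_exp, Real.norm_eq_abs,
      Real.norm_eq_abs]
    have h1 : |Real.sin u + Real.cos u| ≤ 2 := by
      calc |Real.sin u + Real.cos u| ≤ |Real.sin u| + |Real.cos u| := abs_add_le _ _
        _ ≤ 2 := by linarith [abs_sin_le_one u, abs_cos_le_one u]
    have h2 : |(2:ℝ)| = 2 := by norm_num
    rw [h2]
    have := mul_le_mul_of_nonneg_left h1 (exp_pos (-u)).le
    linarith
  have := integral_Ioi_of_hasDerivAt_of_tendsto' hderiv hint htend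
  rw [this]
  norm_num

lemma exp_neg_cos_integral : ∫ u in Set.Ioi (0:ℝ), Real.exp (-u) * Real.cos u = 1 / 2 := by
  have hexp : IntegrableOn (fun u => Real.exp (-u)) (Set.Ioi (0:ℝ)) := by
    simpa using exp_neg_integrableOn_Ioi 0 one_pos
  have hint : IntegrableOn (fun u => Real.exp (-u) * Real.cos u) (Set.Ioi (0:ℝ)) := by
    refine hexp.mono' ?_ ?_
    · exact ((continuous_exp.comp continuous_neg).mul continuous_cos).aestronglyMeasurable
    · filter_upwards with u
      rw [norm_mul, Real.norm_eq_abs, Real.norm_eq_abs, abs_exp]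
      exact mul_le_of_le_one_right (exp_pos _).le (abs_cos_le_one u)
  have hderiv : ∀ u ∈ Set.Ici (0:ℝ), HasDerivAt
      (fun u => Real.exp (-u) * (Real.sin u - Real.cos u) / 2)
      (Real.exp (-u) * Real.cos u) u := by
    intro u _
    have he : HasDerivAt (fun u : ℝ => Real.exp (-u)) (-Real.exp (-u)) u := by
      simpa [Function.comp_def] using (Real.hasDerivAt_exp (-u)).comp u (hasDerivAt_neg u)
    have hsc : HasDerivAt (fun u : ℝ => Real.sin u - Real.cos u)
        (Real.cos u + Real.sin u) u := by
      simpa [sub_eq_add_neg, Pi.add_def] using (Real.hasDerivAt_sin u).sub (Real.hasDerivAt_cos u)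
    have : HasDerivAt (fun u => Real.exp (-u) * (Real.sin u - Real.cos u) / 2)
        ((-Real.exp (-u) * (Real.sin u - Real.cos u) + Real.exp (-u) * (Real.cos u + Real.sin u)) / 2) u :=
      (he.mul hsc).div_const 2
    convert this using 1
    ring
  have htend : Tendsto (fun u => Real.exp (-u) * (Real.sin u - Real.cos u) / 2)
      atTop (nhds 0) := by
    apply squeeze_zero_norm _ tendsto_exp_neg_atTop_nhds_zero
    intro u
    rw [norm_div, norm_mul, Real.norm_eq_abs, abs_exp, Real.norm_eq_abs,
      Real.norm_eq_abs]
    have h1 : |Real.sin u - Real.cos u| ≤ 2 := by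
      calc |Real.sin u - Real.cos u| ≤ |Real.sin u| + |Real.cos u| := abs_sub _ _
        _ ≤ 2 := by linarith [abs_sin_le_one u, abs_cos_le_one u]
    have h2 : |(2:ℝ)| = 2 := by norm_num
    rw [h2]
    have := mul_le_mul_of_nonneg_left h1 (exp_pos (-u)).le
    linarith
  have := integral_Ioi_of_hasDerivAt_of_tendsto' hderiv hint htend
  rw [this]
  norm_num

theorem double_integral_log_two :
    (∫ x in Set.Ioi (0:ℝ), ∫ y in Set.Ioi (0:ℝ),
        Real.exp (-x - y) * Real.sin (x + y) / (2 * x + y)) = Real.log 2 / 2 ∧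
    (∫ x in Set.Ioi (0:ℝ), ∫ y in Set.Ioi (0:ℝ),
        Real.exp (-x - y) * Real.cos (x + y) / (2 * x + y)) = Real.log 2 / 2 := by
  constructor
  · rw [key_double_integral Real.sin Real.measurable_sin (fun u => abs_sin_le_one u),
      exp_neg_sin_integral]
    ring
  · rw [key_double_integral Real.cos Real.measurable_cos (fun u => abs_cos_le_one u),
      exp_neg_cos_integral]
    ring
end

section
/- ∫_0^1 (x² − 1)/((1 + x³) log x) dx = log( Γ(1/6) / (√π · Γ(2/3)) ). -/
open MeasureTheory Real Set Filter Topology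

lemma monomial_integral (c : ℝ) (hc : 0 ≤ c) :
    ∫ x in Ioc (0:ℝ) 1, x ^ c * ((x ^ 2 - 1) / Real.log x)
      = Real.log ((c + 3) / (c + 1)) := by
  set F : ℝ × ℝ → ℝ := fun p => Real.exp ((p.2 + c) * Real.log p.1) with hF
  have hF_meas : Measurable F := Real.measurable_exp.comp (((measurable_snd.add_const c)).mul (Real.measurable_log.comp measurable_fst))
  set μ := volume.restrict (Ioc (0:ℝ) 1)
  set ν := volume.restrict (Ioc (0:ℝ) 2)
  have hint : Integrable F (μ.prod ν) := by
    refine Integrable.mono' (integrable_const 1) hF_meas.aestronglyMeasurable ?_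
    have hmem : ∀ᵐ p ∂(μ.prod ν), p ∈ Ioc (0:ℝ) 1 ×ˢ Ioc (0:ℝ) 2 := by
      rw [Measure.prod_restrict]
      exact ae_restrict_mem (measurableSet_Ioc.prod measurableSet_Ioc)
    filter_upwards [hmem] with p hp
    obtain ⟨⟨h1, h2⟩, h3, _⟩ := hp
    have hlog : Real.log p.1 ≤ 0 := Real.log_nonpos (le_of_lt h1) h2
    have : (p.2 + c) * Real.log p.1 ≤ 0 :=
      mul_nonpos_of_nonneg_of_nonpos (by linarith) hlog
    simpa [hF, abs_of_pos (Real.exp_pos _)] using Real.exp_le_one_iff.mpr this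
  have swap := integral_integral_swap (f := fun x s => F (x, s)) (μ := μ) (ν := ν) hint
  have hLHS : (∫ x, (∫ s, F (x, s) ∂ν) ∂μ)
      = ∫ x in Ioc (0:ℝ) 1, x ^ c * ((x ^ 2 - 1) / Real.log x) := by
    rw [integral_Ioc_eq_integral_Ioo (f := fun x => x ^ c * ((x ^ 2 - 1) / Real.log x))]
    show (∫ x in Ioc (0:ℝ) 1, (∫ s, F (x, s) ∂ν)) = _
    rw [integral_Ioc_eq_integral_Ioo]
    refine setIntegral_congr_fun measurableSet_Ioo (fun x hx => ?_)
    obtain ⟨hx0, hx1⟩ := hx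
    have hL : Real.log x < 0 := Real.log_neg hx0 hx1
    have hLne : Real.log x ≠ 0 := ne_of_lt hL
    show (∫ s in Ioc (0:ℝ) 2, Real.exp ((s + c) * Real.log x)) = _
    rw [← intervalIntegral.integral_of_le (by norm_num : (0:ℝ) ≤ 2)]
    rw [intervalIntegral.integral_comp_add_right (fun t => Real.exp (t * Real.log x)) c]
    rw [intervalIntegral.integral_comp_mul_right (fun u => Real.exp u) hLne]
    rw [integral_exp]
    have e1 : Real.exp ((2 + c) * Real.log x) = x ^ (2:ℕ) * x ^ c := by
      rw [show ((2:ℝ) + c) * Real.log x = Real.log x * (2 + c) by ring,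
        ← Real.rpow_def_of_pos hx0, Real.rpow_add hx0, ← Real.rpow_natCast x 2]
      norm_num
    have e2 : Real.exp ((0 + c) * Real.log x) = x ^ c := by
      rw [show (0 + c) * Real.log x = Real.log x * c by ring, ← Real.rpow_def_of_pos hx0]
    rw [e1, e2, smul_eq_mul]
    field_simp
  rw [hLHS] at swap
  rw [swap]
  have hRHS : (∫ s, (∫ x, F (x, s) ∂μ) ∂ν) = Real.log ((c + 3) / (c + 1)) := by
    have hinner : ∀ s ∈ Ioc (0:ℝ) 2, (∫ x, F (x, s) ∂μ) = (s + (c + 1))⁻¹ := by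
      intro s hs
      have hs0 : 0 < s := hs.1
      have : (∫ x, F (x, s) ∂μ) = ∫ x in Ioc (0:ℝ) 1, x ^ (s + c) := by
        refine setIntegral_congr_fun measurableSet_Ioc (fun x hx => ?_)
        rw [hF]
        show Real.exp ((s + c) * Real.log x) = _
        rw [show (s + c) * Real.log x = Real.log x * (s + c) by ring,
          ← Real.rpow_def_of_pos hx.1]
      rw [this, ← intervalIntegral.integral_of_le (by norm_num : (0:ℝ) ≤ 1)]
      rw [integral_rpow (Or.inl (by linarith : (-1:ℝ) < s + c))]
      rw [Real.one_rpow, Real.zero_rpow (by linarith : s + c + 1 ≠ 0)]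
      rw [show s + c + 1 = s + (c + 1) by ring]
      norm_num
    show (∫ s in Ioc (0:ℝ) 2, (∫ x, F (x, s) ∂μ)) = _
    rw [setIntegral_congr_fun measurableSet_Ioc hinner]
    rw [← intervalIntegral.integral_of_le (by norm_num : (0:ℝ) ≤ 2)]
    rw [intervalIntegral.integral_comp_add_right (fun u => u⁻¹) (c + 1)]
    rw [show (0:ℝ) + (c + 1) = c + 1 by ring, show (2:ℝ) + (c + 1) = c + 3 by ring]
    rw [integral_inv_of_pos (by linarith) (by linarith)]
  exact hRHS

lemma monomial_integral' (n : ℕ) :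
    ∫ x in Ioo (0:ℝ) 1, x ^ (3*n) * ((x ^ 2 - 1) / Real.log x)
      = Real.log ((3*(n:ℝ) + 3) / (3*(n:ℝ) + 1)) := by
  have h := monomial_integral (3*(n:ℝ)) (by positivity)
  rw [integral_Ioc_eq_integral_Ioo] at h
  rw [← h]
  refine setIntegral_congr_fun measurableSet_Ioo (fun x hx => ?_)
  rw [show ((3:ℝ)*(n:ℝ)) = ((3*n : ℕ) : ℝ) by push_cast; ring, Real.rpow_natCast]

lemma g_bounds {x : ℝ} (hx0 : 0 < x) (hx1 : x < 1) :
    0 ≤ (x ^ 2 - 1) / Real.log x ∧ (x ^ 2 - 1) / Real.log x ≤ 2 := by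
  have hL : Real.log x < 0 := Real.log_neg hx0 hx1
  have hlog := Real.log_le_sub_one_of_pos hx0
  constructor
  · exact div_nonneg_of_nonpos (by nlinarith) hL.le
  · rw [div_le_iff_of_neg hL]
    nlinarith

lemma f_bounds {x : ℝ} (hx0 : 0 < x) (hx1 : x < 1) :
    0 ≤ (x ^ 2 - 1) / ((1 + x ^ 3) * Real.log x)
      ∧ (x ^ 2 - 1) / ((1 + x ^ 3) * Real.log x) ≤ (x ^ 2 - 1) / Real.log x := by
  have hL : Real.log x < 0 := Real.log_neg hx0 hx1
  have h3 : (0:ℝ) < 1 + x ^ 3 := by positivity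
  have hg := (g_bounds hx0 hx1).1
  have heq : (x ^ 2 - 1) / ((1 + x ^ 3) * Real.log x)
      = ((x ^ 2 - 1) / Real.log x) / (1 + x ^ 3) := by
    rw [div_div, mul_comm]
  constructor
  · rw [heq]; positivity
  · rw [heq]
    calc ((x ^ 2 - 1) / Real.log x) / (1 + x ^ 3)
        ≤ ((x ^ 2 - 1) / Real.log x) / 1 :=
          div_le_div_of_nonneg_left ?_ ?_ ?_ |>.trans_eq rfl
      _ = (x ^ 2 - 1) / Real.log x := div_one _
    · exact hg
    · norm_num
    · nlinarith

lemma integrable_of_bounded {F : ℝ → ℝ} (hF : Measurable F) {C : ℝ}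
    (hC : ∀ x ∈ Ioo (0:ℝ) 1, |F x| ≤ C) : IntegrableOn F (Ioo (0:ℝ) 1) := by
  refine Integrable.mono' (integrable_const C) hF.aestronglyMeasurable ?_
  filter_upwards [ae_restrict_mem measurableSet_Ioo] with x hx
  simpa using hC x hx

lemma measurable_g : Measurable (fun x : ℝ => (x ^ 2 - 1) / Real.log x) :=
  ((measurable_id.pow_const 2).sub_const 1).div Real.measurable_log

lemma measurable_f :
    Measurable (fun x : ℝ => (x ^ 2 - 1) / ((1 + x ^ 3) * Real.log x)) :=
  ((measurable_id.pow_const 2).sub_const 1).div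
    ((measurable_const.add (measurable_id.pow_const 3)).mul Real.measurable_log)

lemma integrable_f : IntegrableOn
    (fun x : ℝ => (x ^ 2 - 1) / ((1 + x ^ 3) * Real.log x)) (Ioo (0:ℝ) 1) := by
  refine integrable_of_bounded measurable_f (C := 2) (fun x hx => ?_)
  obtain ⟨h1, h2⟩ := f_bounds hx.1 hx.2
  rw [abs_of_nonneg h1]
  exact h2.trans (g_bounds hx.1 hx.2).2

lemma integrable_term (m : ℕ) : IntegrableOn
    (fun x : ℝ => x ^ m * ((x ^ 2 - 1) / Real.log x)) (Ioo (0:ℝ) 1) := by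
  refine integrable_of_bounded ((measurable_id.pow_const m).mul measurable_g)
    (C := 2) (fun x hx => ?_)
  obtain ⟨h1, h2⟩ := g_bounds hx.1 hx.2
  have hp0 : (0:ℝ) ≤ x ^ m := pow_nonneg hx.1.le m
  have hp1 : x ^ m ≤ 1 := pow_le_one₀ hx.1.le hx.2.le
  rw [abs_of_nonneg (mul_nonneg hp0 h1)]
  nlinarith

lemma integrable_rem (m : ℕ) : IntegrableOn
    (fun x : ℝ => x ^ m * ((x ^ 2 - 1) / ((1 + x ^ 3) * Real.log x))) (Ioo (0:ℝ) 1) := by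
  refine integrable_of_bounded ((measurable_id.pow_const m).mul measurable_f)
    (C := 2) (fun x hx => ?_)
  obtain ⟨h1, h2⟩ := f_bounds hx.1 hx.2
  have h2' := (g_bounds hx.1 hx.2).2
  have hp0 : (0:ℝ) ≤ x ^ m := pow_nonneg hx.1.le m
  have hp1 : x ^ m ≤ 1 := pow_le_one₀ hx.1.le hx.2.le
  rw [abs_of_nonneg (mul_nonneg hp0 h1)]
  nlinarith

lemma pointwise_decomp (M : ℕ) {x : ℝ} (hx0 : 0 < x) (hx1 : x < 1) :
    (x ^ 2 - 1) / ((1 + x ^ 3) * Real.log x)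
      = (∑ n ∈ Finset.range M, (-1:ℝ) ^ n * (x ^ (3*n) * ((x ^ 2 - 1) / Real.log x)))
        + (-1) ^ M * (x ^ (3*M) * ((x ^ 2 - 1) / ((1 + x ^ 3) * Real.log x))) := by
  have hL : Real.log x ≠ 0 := (Real.log_neg hx0 hx1).ne
  have h3 : (1:ℝ) + x ^ 3 ≠ 0 := by positivity
  have hne : (-x ^ 3 : ℝ) ≠ 1 := by have := pow_pos hx0 3; intro h; linarith
  have hgeom : ∑ n ∈ Finset.range M, (-1:ℝ) ^ n * x ^ (3*n)
      = (1 - (-x ^ 3) ^ M) / (1 + x ^ 3) := by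
    have h := geom_sum_eq hne M
    have hterm : ∀ n : ℕ, (-x ^ 3 : ℝ) ^ n = (-1) ^ n * x ^ (3*n) := by
      intro n
      rw [neg_pow, ← pow_mul, mul_comm 3 n]
    calc ∑ n ∈ Finset.range M, (-1:ℝ) ^ n * x ^ (3*n)
        = ∑ n ∈ Finset.range M, (-x ^ 3 : ℝ) ^ n := by
          refine Finset.sum_congr rfl (fun n _ => ?_); rw [hterm]
      _ = ((-x ^ 3) ^ M - 1) / (-x ^ 3 - 1) := h
      _ = (1 - (-x ^ 3) ^ M) / (1 + x ^ 3) := by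
          rw [div_eq_div_iff (by have := pow_pos hx0 3; intro h; linarith : -x ^ 3 - 1 ≠ 0) (by positivity)]; ring
  have hsum : ∑ n ∈ Finset.range M, (-1:ℝ) ^ n * (x ^ (3*n) * ((x ^ 2 - 1) / Real.log x))
      = ((1 - (-x ^ 3) ^ M) / (1 + x ^ 3)) * ((x ^ 2 - 1) / Real.log x) := by
    rw [← hgeom, Finset.sum_mul]
    refine Finset.sum_congr rfl (fun n _ => ?_); ring
  rw [hsum, neg_pow, ← pow_mul, mul_comm 3 M]
  field_simp
  ring

lemma partial_sum_eq (M : ℕ) :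
    (∫ x in Ioo (0:ℝ) 1, (x ^ 2 - 1) / ((1 + x ^ 3) * Real.log x))
      = (∑ n ∈ Finset.range M, (-1:ℝ) ^ n * Real.log ((3*(n:ℝ) + 3) / (3*(n:ℝ) + 1)))
        + (-1) ^ M * ∫ x in Ioo (0:ℝ) 1,
            x ^ (3*M) * ((x ^ 2 - 1) / ((1 + x ^ 3) * Real.log x)) := by
  have step1 : (∫ x in Ioo (0:ℝ) 1, (x ^ 2 - 1) / ((1 + x ^ 3) * Real.log x))
      = ∫ x in Ioo (0:ℝ) 1,
          ((∑ n ∈ Finset.range M, (-1:ℝ) ^ n * (x ^ (3*n) * ((x ^ 2 - 1) / Real.log x)))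
            + (-1) ^ M * (x ^ (3*M) * ((x ^ 2 - 1) / ((1 + x ^ 3) * Real.log x)))) :=
    setIntegral_congr_fun measurableSet_Ioo (fun x hx => pointwise_decomp M hx.1 hx.2)
  rw [step1]
  have hint_sum : IntegrableOn (fun x : ℝ =>
      ∑ n ∈ Finset.range M, (-1:ℝ) ^ n * (x ^ (3*n) * ((x ^ 2 - 1) / Real.log x)))
      (Ioo (0:ℝ) 1) := by
    apply integrable_finset_sum
    intro n _
    exact ((integrable_term (3*n)).const_mul _)
  have hint_rem : IntegrableOn (fun x : ℝ =>
      (-1:ℝ) ^ M * (x ^ (3*M) * ((x ^ 2 - 1) / ((1 + x ^ 3) * Real.log x))))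
      (Ioo (0:ℝ) 1) := (integrable_rem (3*M)).const_mul _
  rw [integral_add hint_sum hint_rem, integral_finset_sum _
    (fun n _ => (integrable_term (3*n)).const_mul _), integral_const_mul]
  congr 1
  refine Finset.sum_congr rfl (fun n _ => ?_)
  rw [integral_const_mul, monomial_integral' n]

lemma remainder_bound (M : ℕ) :
    |∫ x in Ioo (0:ℝ) 1, x ^ (3*M) * ((x ^ 2 - 1) / ((1 + x ^ 3) * Real.log x))|
      ≤ 2 / (3*(M:ℝ) + 1) := by
  have hb : ∀ x ∈ Ioo (0:ℝ) 1,
      x ^ (3*M) * ((x ^ 2 - 1) / ((1 + x ^ 3) * Real.log x)) ≤ 2 * x ^ (3*M) := by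
    intro x hx
    obtain ⟨h1, h2⟩ := f_bounds hx.1 hx.2
    have h2' := (g_bounds hx.1 hx.2).2
    have hp0 : (0:ℝ) ≤ x ^ (3*M) := pow_nonneg hx.1.le _
    nlinarith
  have hnn : ∀ x ∈ Ioo (0:ℝ) 1,
      0 ≤ x ^ (3*M) * ((x ^ 2 - 1) / ((1 + x ^ 3) * Real.log x)) := by
    intro x hx
    exact mul_nonneg (pow_nonneg hx.1.le _) (f_bounds hx.1 hx.2).1
  have hint2 : IntegrableOn (fun x : ℝ => 2 * x ^ (3*M)) (Ioo (0:ℝ) 1) :=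
    ((continuous_const.mul (continuous_pow (3*M))).integrableOn_Icc).mono_set
      Ioo_subset_Icc_self
  have hmono : (∫ x in Ioo (0:ℝ) 1, x ^ (3*M) * ((x ^ 2 - 1) / ((1 + x ^ 3) * Real.log x)))
      ≤ ∫ x in Ioo (0:ℝ) 1, 2 * x ^ (3*M) :=
    setIntegral_mono_on (integrable_rem (3*M)) hint2 measurableSet_Ioo hb
  have hpos : 0 ≤ ∫ x in Ioo (0:ℝ) 1,
      x ^ (3*M) * ((x ^ 2 - 1) / ((1 + x ^ 3) * Real.log x)) :=
    setIntegral_nonneg measurableSet_Ioo hnn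
  have hval : (∫ x in Ioo (0:ℝ) 1, 2 * x ^ (3*M)) = 2 / (3*(M:ℝ) + 1) := by
    rw [← integral_Ioc_eq_integral_Ioo,
      ← intervalIntegral.integral_of_le (by norm_num : (0:ℝ) ≤ 1),
      intervalIntegral.integral_const_mul, integral_pow]
    push_cast
    norm_num
    rw [div_eq_mul_inv]
  rw [abs_of_nonneg hpos]
  rw [hval] at hmono
  exact hmono

lemma partial_sums_tendsto :
    Tendsto (fun M => ∑ n ∈ Finset.range M, (-1:ℝ) ^ n * Real.log ((3*(n:ℝ) + 3) / (3*(n:ℝ) + 1)))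
      atTop (𝓝 (∫ x in Ioo (0:ℝ) 1, (x ^ 2 - 1) / ((1 + x ^ 3) * Real.log x))) := by
  rw [tendsto_iff_dist_tendsto_zero]
  have hbd : ∀ M : ℕ, dist
      (∑ n ∈ Finset.range M, (-1:ℝ) ^ n * Real.log ((3*(n:ℝ) + 3) / (3*(n:ℝ) + 1)))
      (∫ x in Ioo (0:ℝ) 1, (x ^ 2 - 1) / ((1 + x ^ 3) * Real.log x))
      ≤ 2 / (3*(M:ℝ) + 1) := by
    intro M
    rw [Real.dist_eq]
    have h := partial_sum_eq M
    have : (∑ n ∈ Finset.range M, (-1:ℝ) ^ n * Real.log ((3*(n:ℝ) + 3) / (3*(n:ℝ) + 1)))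
        - (∫ x in Ioo (0:ℝ) 1, (x ^ 2 - 1) / ((1 + x ^ 3) * Real.log x))
        = -((-1) ^ M * ∫ x in Ioo (0:ℝ) 1,
            x ^ (3*M) * ((x ^ 2 - 1) / ((1 + x ^ 3) * Real.log x))) := by
      rw [h]; ring
    rw [this, abs_neg, abs_mul, abs_pow, abs_neg, abs_one, one_pow, one_mul]
    exact remainder_bound M
  have hlim : Tendsto (fun M : ℕ => 2 / (3*(M:ℝ) + 1)) atTop (𝓝 0) := by
    apply Tendsto.div_atTop tendsto_const_nhds
    exact tendsto_atTop_add_const_right _ 1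
      (tendsto_natCast_atTop_atTop.const_mul_atTop (by norm_num))
  exact squeeze_zero (fun M => dist_nonneg) hbd hlim

noncomputable def Qprod (s : ℝ) (N : ℕ) : ℝ := ∏ k ∈ Finset.range N, (s + k)

lemma Qprod_pos {s : ℝ} (hs : 0 < s) (N : ℕ) : 0 < Qprod s N :=
  Finset.prod_pos (fun k _ => by positivity)

lemma Qprod_succ (s : ℝ) (N : ℕ) : Qprod s (N + 1) = Qprod s N * (s + N) :=
  Finset.prod_range_succ _ _

lemma Qprod_one (N : ℕ) : Qprod 1 N = N.factorial := by
  induction N with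
  | zero => simp [Qprod]
  | succ n ih =>
    rw [Qprod_succ, ih, Nat.factorial_succ]
    push_cast
    ring

lemma sum_even (N : ℕ) :
    (∑ n ∈ Finset.range (2*N), (-1:ℝ) ^ n * Real.log ((3*(n:ℝ) + 3) / (3*(n:ℝ) + 1)))
      = Real.log ((Qprod (1/2) N * Qprod (2/3) N) / (Qprod (1/6) N * Qprod 1 N)) := by
  induction N with
  | zero => simp [Qprod]
  | succ m ih =>
    have hNpos : (0:ℝ) ≤ (m:ℝ) := Nat.cast_nonneg m
    rw [show 2*(m+1) = (2*m) + 1 + 1 by ring, Finset.sum_range_succ, Finset.sum_range_succ, ih]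
    have hpowE : (-1:ℝ) ^ (2*m) = 1 := by
      rw [pow_mul]; norm_num
    have hpowO : (-1:ℝ) ^ (2*m + 1) = -1 := by
      rw [pow_succ, hpowE]; norm_num
    have c1 : (3*((2*m : ℕ):ℝ) + 3) / (3*((2*m : ℕ):ℝ) + 1)
        = ((1/2 : ℝ) + m) / ((1/6 : ℝ) + m) := by
      push_cast
      rw [div_eq_div_iff (by linarith) (by linarith)]
      ring
    have c2 : (3*((2*m + 1 : ℕ):ℝ) + 3) / (3*((2*m + 1 : ℕ):ℝ) + 1)
        = ((1 : ℝ) + m) / ((2/3 : ℝ) + m) := by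
      push_cast
      rw [div_eq_div_iff (by linarith) (by linarith)]
      ring
    rw [hpowE, hpowO, c1, c2, one_mul, neg_one_mul]
    have q2 : (0:ℝ) < Qprod (1/2) m := Qprod_pos (by norm_num) m
    have q3 : (0:ℝ) < Qprod (2/3) m := Qprod_pos (by norm_num) m
    have q6 : (0:ℝ) < Qprod (1/6) m := Qprod_pos (by norm_num) m
    have q1 : (0:ℝ) < Qprod 1 m := Qprod_pos (by norm_num) m
    have f2 : (0:ℝ) < (1/2 : ℝ) + m := by linarith
    have f3 : (0:ℝ) < (2/3 : ℝ) + m := by linarith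
    have f6 : (0:ℝ) < (1/6 : ℝ) + m := by linarith
    have f1 : (0:ℝ) < (1 : ℝ) + m := by linarith
    rw [Qprod_succ, Qprod_succ, Qprod_succ, Qprod_succ]
    rw [Real.log_div (by positivity) (by positivity),
        Real.log_div (by positivity) (by positivity),
        Real.log_div (by positivity) (by positivity),
        Real.log_div (by positivity) (by positivity),
        Real.log_mul (by positivity) (by positivity),
        Real.log_mul (by positivity) (by positivity),
        Real.log_mul (by positivity) (by positivity),
        Real.log_mul (by positivity) (by positivity),
        Real.log_mul (by positivity) (by positivity),
        Real.log_mul (by positivity) (by positivity),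
        Real.log_mul (by positivity) (by positivity),
        Real.log_mul (by positivity) (by positivity)]
    ring

lemma gammaSeq_eq (s : ℝ) (n : ℕ) :
    Real.GammaSeq s n = (n:ℝ) ^ s * n.factorial / Qprod s (n + 1) := rfl

lemma p_eq (n : ℕ) (hn : 1 ≤ n) :
    (Qprod (1/2) (n+1) * Qprod (2/3) (n+1)) / (Qprod (1/6) (n+1) * Qprod 1 (n+1))
      = ((n:ℝ)/((n:ℝ)+1))
        * (Real.GammaSeq (1/6) n / (Real.GammaSeq (1/2) n * Real.GammaSeq (2/3) n)) := by
  have hn0 : (0:ℝ) < (n:ℝ) := by exact_mod_cast hn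
  have key : (n:ℝ) ^ ((1:ℝ)/6) * (n:ℝ) = (n:ℝ) ^ ((1:ℝ)/2) * (n:ℝ) ^ ((2:ℝ)/3) := by
    rw [show (n:ℝ) ^ ((1:ℝ)/6) * (n:ℝ) = (n:ℝ) ^ ((1:ℝ)/6) * (n:ℝ) ^ (1:ℝ) by
      rw [Real.rpow_one], ← Real.rpow_add hn0, ← Real.rpow_add hn0]
    norm_num
  have q2 : (0:ℝ) < Qprod (1/2) (n+1) := Qprod_pos (by norm_num) _
  have q3 : (0:ℝ) < Qprod (2/3) (n+1) := Qprod_pos (by norm_num) _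
  have q6 : (0:ℝ) < Qprod (1/6) (n+1) := Qprod_pos (by norm_num) _
  have r2 : (0:ℝ) < (n:ℝ) ^ ((1:ℝ)/2) := Real.rpow_pos_of_pos hn0 _
  have r3 : (0:ℝ) < (n:ℝ) ^ ((2:ℝ)/3) := Real.rpow_pos_of_pos hn0 _
  have r6 : (0:ℝ) < (n:ℝ) ^ ((1:ℝ)/6) := Real.rpow_pos_of_pos hn0 _
  have hfac : (0:ℝ) < (n.factorial : ℝ) := by exact_mod_cast n.factorial_pos
  rw [gammaSeq_eq, gammaSeq_eq, gammaSeq_eq, Qprod_one, Nat.factorial_succ]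
  push_cast
  field_simp
  linear_combination key.symm

lemma prod_tendsto :
    Tendsto (fun N : ℕ => (Qprod (1/2) N * Qprod (2/3) N) / (Qprod (1/6) N * Qprod 1 N))
      atTop (𝓝 (Real.Gamma (1/6) / (Real.Gamma (1/2) * Real.Gamma (2/3)))) := by
  have hne : Real.Gamma (1/2) * Real.Gamma (2/3) ≠ 0 := by
    have h1 := Real.Gamma_pos_of_pos (show (0:ℝ) < 1/2 by norm_num)
    have h2 := Real.Gamma_pos_of_pos (show (0:ℝ) < 2/3 by norm_num)
    positivity
  have h1 : Tendsto (fun n : ℕ => ((n:ℝ)/((n:ℝ)+1))) atTop (𝓝 1) :=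
    tendsto_natCast_div_add_atTop (1:ℝ)
  have h2 : Tendsto (fun n : ℕ =>
      Real.GammaSeq (1/6) n / (Real.GammaSeq (1/2) n * Real.GammaSeq (2/3) n)) atTop
      (𝓝 (Real.Gamma (1/6) / (Real.Gamma (1/2) * Real.Gamma (2/3)))) :=
    (Real.GammaSeq_tendsto_Gamma (1/6)).div
      ((Real.GammaSeq_tendsto_Gamma (1/2)).mul (Real.GammaSeq_tendsto_Gamma (2/3))) hne
  have hmul := h1.mul h2
  rw [one_mul] at hmul
  have hev : (fun n : ℕ => ((n:ℝ)/((n:ℝ)+1))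
        * (Real.GammaSeq (1/6) n / (Real.GammaSeq (1/2) n * Real.GammaSeq (2/3) n)))
      =ᶠ[atTop] (fun n : ℕ =>
        (Qprod (1/2) (n+1) * Qprod (2/3) (n+1)) / (Qprod (1/6) (n+1) * Qprod 1 (n+1))) := by
    filter_upwards [eventually_ge_atTop 1] with n hn
    exact (p_eq n hn).symm
  have := hmul.congr' hev
  exact (tendsto_add_atTop_iff_nat 1).mp this

theorem integral_gamma_example :
    (∫ x in (0:ℝ)..1, (x ^ 2 - 1) / ((1 + x ^ 3) * Real.log x))
      = Real.log (Real.Gamma (1 / 6) / (Real.sqrt π * Real.Gamma (2 / 3))) := by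
  have hL : (0:ℝ) < Real.Gamma (1/6) / (Real.Gamma (1/2) * Real.Gamma (2/3)) := by
    have h1 := Real.Gamma_pos_of_pos (show (0:ℝ) < 1/6 by norm_num)
    have h2 := Real.Gamma_pos_of_pos (show (0:ℝ) < 1/2 by norm_num)
    have h3 := Real.Gamma_pos_of_pos (show (0:ℝ) < 2/3 by norm_num)
    positivity
  have hlog : Tendsto (fun N : ℕ => Real.log
      ((Qprod (1/2) N * Qprod (2/3) N) / (Qprod (1/6) N * Qprod 1 N))) atTop
      (𝓝 (Real.log (Real.Gamma (1/6) / (Real.Gamma (1/2) * Real.Gamma (2/3))))) :=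
    ((Real.continuousAt_log hL.ne').tendsto).comp prod_tendsto
  have h2N : Tendsto (fun N : ℕ => ∑ n ∈ Finset.range (2*N),
      (-1:ℝ) ^ n * Real.log ((3*(n:ℝ) + 3) / (3*(n:ℝ) + 1))) atTop
      (𝓝 (∫ x in Ioo (0:ℝ) 1, (x ^ 2 - 1) / ((1 + x ^ 3) * Real.log x))) :=
    partial_sums_tendsto.comp
      (tendsto_atTop_mono (fun n => by omega : ∀ n : ℕ, n ≤ 2*n) tendsto_id)
  have h2N' : Tendsto (fun N : ℕ => Real.log
      ((Qprod (1/2) N * Qprod (2/3) N) / (Qprod (1/6) N * Qprod 1 N))) atTop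
      (𝓝 (∫ x in Ioo (0:ℝ) 1, (x ^ 2 - 1) / ((1 + x ^ 3) * Real.log x))) := by
    refine h2N.congr (fun N => ?_)
    exact sum_even N
  have hEq : (∫ x in Ioo (0:ℝ) 1, (x ^ 2 - 1) / ((1 + x ^ 3) * Real.log x))
      = Real.log (Real.Gamma (1/6) / (Real.Gamma (1/2) * Real.Gamma (2/3))) :=
    tendsto_nhds_unique h2N' hlog
  rw [intervalIntegral.integral_of_le (by norm_num : (0:ℝ) ≤ 1),
    integral_Ioc_eq_integral_Ioo, hEq, Real.Gamma_one_half_eq]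
end

section
/- γ = −∫_0^1 ∫_0^1 (1−x)/((1−xy)·log(xy)) dx dy, where γ is the Euler–Mascheroni constant. -/
open MeasureTheory Real Set ENNReal Filter Topology

lemma bint_rpow {a : ℝ} (ha : 0 ≤ a) :
    ∫ x in Ioo (0:ℝ) 1, x ^ a = 1/(a+1) := by
  rw [← integral_Ioc_eq_integral_Ioo,
    ← intervalIntegral.integral_of_le (by norm_num : (0:ℝ) ≤ 1),
    integral_rpow (Or.inl (by linarith))]
  rw [Real.one_rpow, Real.zero_rpow (by linarith)]
  norm_num

lemma iOn_rpow {a : ℝ} (ha : 0 ≤ a) :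
    IntegrableOn (fun x : ℝ => x ^ a) (Ioo 0 1) :=
  ((intervalIntegral.intervalIntegrable_rpow' (a := (0:ℝ)) (b := 1) (by linarith : (-1:ℝ) < a)).1).mono_set
    Ioo_subset_Ioc_self

lemma lint_rpow_s13 {a : ℝ} (ha : 0 ≤ a) :
    ∫⁻ x in Ioo (0:ℝ) 1, ENNReal.ofReal (x ^ a) = ENNReal.ofReal (1/(a+1)) := by
  rw [← ofReal_integral_eq_lintegral_ofReal (iOn_rpow ha)]
  · rw [bint_rpow ha]
  · filter_upwards [ae_restrict_mem measurableSet_Ioo] with x hx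
    exact rpow_nonneg hx.1.le a

lemma lint_one_sub_rpow {a : ℝ} (ha : 0 ≤ a) :
    ∫⁻ x in Ioo (0:ℝ) 1, ENNReal.ofReal ((1 - x) * x ^ a)
      = ENNReal.ofReal (1/(a+1) - 1/(a+2)) := by
  have key : ∀ x ∈ Ioo (0:ℝ) 1, (1 - x) * x ^ a = x ^ a - x ^ (a+1) := by
    intro x hx
    rw [rpow_add_one (ne_of_gt hx.1)]
    ring
  have keyae : (fun x : ℝ => (1 - x) * x ^ a)
      =ᵐ[volume.restrict (Ioo (0:ℝ) 1)] (fun x => x ^ a - x ^ (a+1)) := by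
    filter_upwards [ae_restrict_mem measurableSet_Ioo] with x hx using key x hx
  have hi1 := iOn_rpow ha
  have hi2 := iOn_rpow (by linarith : (0:ℝ) ≤ a + 1)
  have hint : IntegrableOn (fun x : ℝ => (1 - x) * x ^ a) (Ioo 0 1) :=
    (hi1.sub hi2).congr keyae.symm
  rw [← ofReal_integral_eq_lintegral_ofReal hint]
  · congr 1
    rw [integral_congr_ae keyae, integral_sub hi1 hi2, bint_rpow ha,
      bint_rpow (by linarith : (0:ℝ) ≤ a + 1)]
    ring_nf
  · filter_upwards [ae_restrict_mem measurableSet_Ioo] with x hx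
    exact mul_nonneg (by linarith [hx.2]) (rpow_nonneg hx.1.le a)

lemma lint_t {b : ℝ} (hb : 1 ≤ b) :
    ∫⁻ t in Ioi (0:ℝ), ENNReal.ofReal ((1/(b+t) - 1/(b+t+1)) * (1/(b+t)))
      = ENNReal.ofReal (1/b - (Real.log (b+1) - Real.log b)) := by
  have hbpos : (0:ℝ) < b := by linarith
  set g : ℝ → ℝ := fun t => Real.log (b+t+1) - Real.log (b+t) - 1/(b+t) with hg
  have hderiv : ∀ t ∈ Ici (0:ℝ), HasDerivAt g ((1/(b+t) - 1/(b+t+1)) * (1/(b+t))) t := by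
    intro t ht
    have htpos : (0:ℝ) ≤ t := ht
    have h1 : (0:ℝ) < b + t := by linarith
    have h2 : (0:ℝ) < b + t + 1 := by linarith
    have d1 : HasDerivAt (fun t : ℝ => b + t + 1) 1 t := by
      simpa using ((hasDerivAt_id t).const_add b).add_const 1
    have d2 : HasDerivAt (fun t : ℝ => b + t) 1 t := (hasDerivAt_id t).const_add b
    have dl1 : HasDerivAt (fun t : ℝ => Real.log (b+t+1)) (1/(b+t+1)) t := by
      simpa [one_div, Function.comp_def] using (Real.hasDerivAt_log (ne_of_gt h2)).comp t d1
    have dl2 : HasDerivAt (fun t : ℝ => Real.log (b+t)) (1/(b+t)) t := by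
      simpa [one_div, Function.comp_def] using (Real.hasDerivAt_log (ne_of_gt h1)).comp t d2
    have dinv : HasDerivAt (fun t : ℝ => 1/(b+t)) (-(1/(b+t)^2)) t := by
      simpa [one_div, neg_div, Pi.inv_def] using d2.inv (ne_of_gt h1)
    have := (dl1.fun_sub dl2).fun_sub dinv
    refine this.congr_deriv ?_
    field_simp
    ring
  have hpos : ∀ t ∈ Ioi (0:ℝ), 0 ≤ (1/(b+t) - 1/(b+t+1)) * (1/(b+t)) := by
    intro t ht
    have h1 : (0:ℝ) < b + t := by linarith [mem_Ioi.mp ht]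
    have h2 : (0:ℝ) < b + t + 1 := by linarith
    have : (1/(b+t) - 1/(b+t+1)) * (1/(b+t)) = ((b+t)^2 * (b+t+1))⁻¹ := by
      field_simp; ring
    rw [this]; positivity
  have hlim : Tendsto g atTop (𝓝 0) := by
    have hinv : Tendsto (fun t : ℝ => 1/(b+t)) atTop (𝓝 0) := by
      simpa [one_div, Pi.inv_def] using (tendsto_atTop_add_const_left atTop b tendsto_id).inv_tendsto_atTop
    have hrat : Tendsto (fun t : ℝ => 1 + 1/(b+t)) atTop (𝓝 1) := by
      simpa using hinv.const_add 1
    have hlog : Tendsto (fun t : ℝ => Real.log (1 + 1/(b+t))) atTop (𝓝 0) := by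
      have := (Real.continuousAt_log (one_ne_zero)).tendsto.comp hrat
      simpa [Function.comp_def] using this
    have heq : ∀ᶠ t : ℝ in atTop, Real.log (1 + 1/(b+t)) - 1/(b+t) = g t := by
      filter_upwards [eventually_gt_atTop 0] with t ht
      have h1 : (0:ℝ) < b + t := by linarith
      have : (1:ℝ) + 1/(b+t) = (b+t+1)/(b+t) := by field_simp
      rw [hg]
      simp only [this, Real.log_div (ne_of_gt (by linarith : (0:ℝ) < b+t+1)) (ne_of_gt h1)]
    have := (hlog.sub hinv).congr' heq
    simpa using this
  have hint : IntegrableOn (fun t : ℝ => (1/(b+t) - 1/(b+t+1)) * (1/(b+t))) (Ioi 0) :=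
    integrableOn_Ioi_deriv_of_nonneg' hderiv hpos hlim
  rw [← ofReal_integral_eq_lintegral_ofReal hint]
  · congr 1
    have := integral_Ioi_of_hasDerivAt_of_nonneg' hderiv hpos hlim
    rw [this, hg]
    simp only [add_zero]
    ring
  · filter_upwards [ae_restrict_mem measurableSet_Ioi] with t ht using hpos t ht

lemma lint_exp_s13 {u : ℝ} (hu : u ∈ Ioo (0:ℝ) 1) :
    ∫⁻ t in Ioi (0:ℝ), ENNReal.ofReal (u ^ t) = ENNReal.ofReal (1/(-Real.log u)) := by
  obtain ⟨h0, h1⟩ := hu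
  have hlogneg : Real.log u < 0 := Real.log_neg h0 h1
  set b : ℝ := -Real.log u with hbdef
  have hbpos : 0 < b := by simp [hbdef]; linarith
  have hrw : ∀ t : ℝ, u ^ t = Real.exp (-(b * t)) := by
    intro t
    rw [Real.rpow_def_of_pos h0]
    congr 1
    rw [hbdef]; ring
  set g : ℝ → ℝ := fun t => -(Real.exp (-(b*t)))/b with hg
  have hderiv : ∀ t ∈ Ici (0:ℝ), HasDerivAt g (u ^ t) t := by
    intro t _
    have d1 : HasDerivAt (fun t : ℝ => -(b*t)) (-b) t := by
      simpa [Pi.neg_def] using ((hasDerivAt_id t).const_mul b).neg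
    have d2 : HasDerivAt (fun t : ℝ => Real.exp (-(b*t))) (Real.exp (-(b*t)) * (-b)) t :=
      (Real.hasDerivAt_exp _).comp t d1
    have := (d2.fun_neg).div_const b
    rw [hrw t]
    refine this.congr_deriv ?_
    field_simp
  have hpos : ∀ t ∈ Ioi (0:ℝ), 0 ≤ u ^ t := fun t _ => rpow_nonneg h0.le t
  have hlim : Tendsto g atTop (𝓝 0) := by
    have h2 : Tendsto (fun t : ℝ => -(b*t)) atTop atBot := by
      have : Tendsto (fun t : ℝ => b*t) atTop atTop :=
        Tendsto.const_mul_atTop hbpos tendsto_id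
      exact tendsto_neg_atBot_iff.mpr this
    have h3 : Tendsto (fun t : ℝ => Real.exp (-(b*t))) atTop (𝓝 0) :=
      Real.tendsto_exp_atBot.comp h2
    have := (h3.neg).div_const b
    simpa using this
  have hint : IntegrableOn (fun t : ℝ => u ^ t) (Ioi 0) :=
    integrableOn_Ioi_deriv_of_nonneg' hderiv hpos hlim
  rw [← ofReal_integral_eq_lintegral_ofReal hint]
  · congr 1
    rw [integral_Ioi_of_hasDerivAt_of_nonneg' hderiv hpos hlim, hg]
    simp
    field_simp
  · filter_upwards [ae_restrict_mem measurableSet_Ioi] with t ht using hpos t ht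

lemma term_nonneg (n : ℕ) :
    0 ≤ 1/((n:ℝ)+1) - (Real.log ((n:ℝ)+2) - Real.log ((n:ℝ)+1)) := by
  have h1 : (0:ℝ) < (n:ℝ)+1 := by positivity
  have h2 : (0:ℝ) < ((n:ℝ)+2)/((n:ℝ)+1) := by positivity
  have := Real.log_le_sub_one_of_pos h2
  rw [Real.log_div (by positivity) (ne_of_gt h1)] at this
  have he : ((n:ℝ)+2)/((n:ℝ)+1) - 1 = 1/((n:ℝ)+1) := by
    field_simp
    ring
  linarith [he ▸ this]


lemma series_gamma :
    ∑' n : ℕ, ENNReal.ofReal (1/((n:ℝ)+1) - (Real.log ((n:ℝ)+2) - Real.log ((n:ℝ)+1)))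
      = ENNReal.ofReal Real.eulerMascheroniConstant := by
  set a : ℕ → ℝ := fun n => 1/((n:ℝ)+1) - (Real.log ((n:ℝ)+2) - Real.log ((n:ℝ)+1)) with ha
  have hpartial : ∀ N : ℕ, ∑ n ∈ Finset.range N, a n = Real.eulerMascheroniSeq N := by
    intro N
    rw [Real.eulerMascheroniSeq]
    rw [ha]
    simp only
    rw [Finset.sum_sub_distrib]
    have hlog : ∑ n ∈ Finset.range N, (Real.log ((n:ℝ)+2) - Real.log ((n:ℝ)+1))
        = Real.log ((N:ℝ)+1) := by
      have := Finset.sum_range_sub (f := fun i : ℕ => Real.log ((i:ℝ)+1)) N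
      have h0 : Real.log ((0:ℕ):ℝ) + 1 = 1 := by norm_num
      rw [show Real.log ((N:ℝ)+1) = (Real.log ((N:ℝ)+1) - Real.log (((0:ℕ):ℝ)+1)) by
        norm_num, ← this]
      apply Finset.sum_congr rfl
      intro i _
      push_cast
      ring_nf
    have hharm : ∑ n ∈ Finset.range N, 1/((n:ℝ)+1) = (harmonic N : ℝ) := by
      rw [harmonic]
      push_cast
      simp [one_div]
    rw [hlog, hharm]
  have htend : Tendsto (fun N => ∑ n ∈ Finset.range N, a n) atTop
      (𝓝 Real.eulerMascheroniConstant) := by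
    simp only [hpartial]
    exact Real.tendsto_eulerMascheroniSeq
  have hsum : HasSum a Real.eulerMascheroniConstant :=
    (hasSum_iff_tendsto_nat_of_nonneg term_nonneg _).mpr htend
  rw [← ENNReal.ofReal_tsum_of_nonneg term_nonneg hsum.summable, hsum.tsum_eq]

lemma pointwise_expand {x y : ℝ} (hx : x ∈ Ioo (0:ℝ) 1) (hy : y ∈ Ioo (0:ℝ) 1) :
    ENNReal.ofReal ((1-x) / ((1-x*y) * (-Real.log (x*y))))
      = ∑' n : ℕ, ∫⁻ t in Ioi (0:ℝ),
          ENNReal.ofReal ((1-x) * x ^ ((n:ℝ)+t) * y ^ ((n:ℝ)+t)) := by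
  set u : ℝ := x*y with hu
  have hu0 : 0 < u := mul_pos hx.1 hy.1
  have hu1 : u < 1 := by
    calc u = x*y := rfl
    _ < 1*1 := by
      apply mul_lt_mul' hx.2.le hy.2 hy.1.le one_pos
    _ = 1 := by norm_num
  have hlog : Real.log u < 0 := Real.log_neg hu0 hu1
  have hxnn : 0 ≤ 1 - x := by linarith [hx.2]
  -- evaluate each term
  have hterm : ∀ n : ℕ, (∫⁻ t in Ioi (0:ℝ),
      ENNReal.ofReal ((1-x) * x ^ ((n:ℝ)+t) * y ^ ((n:ℝ)+t)))
      = ENNReal.ofReal ((1-x) * u ^ n * (1/(-Real.log u))) := by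
    intro n
    have hcongr : ∀ t : ℝ, ENNReal.ofReal ((1-x) * x ^ ((n:ℝ)+t) * y ^ ((n:ℝ)+t))
        = ENNReal.ofReal ((1-x) * u ^ n) * ENNReal.ofReal (u ^ t) := by
      intro t
      rw [← ENNReal.ofReal_mul (mul_nonneg hxnn (pow_nonneg hu0.le n))]
      congr 1
      rw [mul_assoc, ← Real.mul_rpow hx.1.le hy.1.le, ← hu,
        Real.rpow_add hu0, Real.rpow_natCast]
      ring
    simp_rw [hcongr]
    rw [lintegral_const_mul' _ _ ENNReal.ofReal_ne_top, lint_exp_s13 ⟨hu0, hu1⟩,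
      ← ENNReal.ofReal_mul (mul_nonneg hxnn (pow_nonneg hu0.le n))]
  simp_rw [hterm]
  -- sum the geometric series
  have hc : ∀ n : ℕ, (1-x) * u ^ n * (1/(-Real.log u))
      = ((1-x) * (1/(-Real.log u))) * u ^ n := by intro n; ring
  simp_rw [hc]
  have hcnn : 0 ≤ (1-x) * (1/(-Real.log u)) := by
    apply mul_nonneg hxnn
    apply le_of_lt
    rw [one_div]
    apply inv_pos.mpr
    linarith
  simp_rw [ENNReal.ofReal_mul hcnn, ENNReal.ofReal_pow hu0.le]
  rw [ENNReal.tsum_mul_left, ENNReal.tsum_geometric]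
  have h1u : (1 : ℝ≥0∞) - ENNReal.ofReal u = ENNReal.ofReal (1 - u) := by
    rw [ENNReal.ofReal_sub _ hu0.le, ENNReal.ofReal_one]
  rw [h1u, ← ENNReal.ofReal_inv_of_pos (by linarith : (0:ℝ) < 1 - u),
    ← ENNReal.ofReal_mul hcnn]
  congr 1
  have hne1 : (1 - u) ≠ 0 := by linarith
  have hne2 : -Real.log u ≠ 0 := by linarith
  field_simp

lemma measF (n : ℕ) (y : ℝ) : Measurable (fun p : ℝ × ℝ =>
    ENNReal.ofReal ((1-p.1) * p.1 ^ ((n:ℝ)+p.2) * y ^ ((n:ℝ)+p.2))) := by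
  apply Measurable.ennreal_ofReal
  apply Measurable.mul
  · exact (measurable_const.sub measurable_fst).mul
      (measurable_fst.pow (measurable_const.add measurable_snd))
  · exact measurable_const.pow (measurable_const.add measurable_snd)

lemma inner_x_eval {y : ℝ} (hy : y ∈ Ioo (0:ℝ) 1) :
    ∫⁻ x in Ioo (0:ℝ) 1, ENNReal.ofReal ((1-x) / ((1-x*y) * (-Real.log (x*y))))
      = ∑' n : ℕ, ∫⁻ t in Ioi (0:ℝ),
          ENNReal.ofReal (1/(((n:ℝ)+t)+1) - 1/(((n:ℝ)+t)+2))
            * ENNReal.ofReal (y ^ ((n:ℝ)+t)) := by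
  rw [setLIntegral_congr_fun measurableSet_Ioo
    (fun x hx => pointwise_expand hx hy)]
  rw [lintegral_tsum (fun n => ?_)]
  · congr 1
    funext n
    rw [lintegral_lintegral_swap ((measF n y).aemeasurable)]
    apply setLIntegral_congr_fun measurableSet_Ioi
    intro t ht
    have ha : (0:ℝ) ≤ (n:ℝ) + t := add_nonneg (Nat.cast_nonneg n) (le_of_lt (mem_Ioi.mp ht))
    have hsplit : ∀ x : ℝ, ENNReal.ofReal ((1-x) * x ^ ((n:ℝ)+t) * y ^ ((n:ℝ)+t))
        = ENNReal.ofReal ((1-x) * x ^ ((n:ℝ)+t)) * ENNReal.ofReal (y ^ ((n:ℝ)+t)) := by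
      intro x
      rw [← ENNReal.ofReal_mul' (rpow_nonneg hy.1.le _)]
    simp_rw [hsplit]
    rw [lintegral_mul_const' _ _ ENNReal.ofReal_ne_top, lint_one_sub_rpow ha]
  · exact ((measF n y).lintegral_prod_right').aemeasurable

lemma measG (n : ℕ) : Measurable (fun p : ℝ × ℝ =>
    ENNReal.ofReal (1/(((n:ℝ)+p.2)+1) - 1/(((n:ℝ)+p.2)+2))
      * ENNReal.ofReal (p.1 ^ ((n:ℝ)+p.2))) := by
  apply Measurable.fun_mul
  · apply Measurable.ennreal_ofReal
    apply Measurable.sub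
    · exact (measurable_const.div ((measurable_const.add measurable_snd).add measurable_const))
    · exact (measurable_const.div ((measurable_const.add measurable_snd).add measurable_const))
  · exact Measurable.ennreal_ofReal (measurable_fst.pow (measurable_const.add measurable_snd))

lemma per_n (n : ℕ) :
    ∫⁻ t in Ioi (0:ℝ), ENNReal.ofReal (1/(((n:ℝ)+t)+1) - 1/(((n:ℝ)+t)+2))
        * ENNReal.ofReal (1/(((n:ℝ)+t)+1))
      = ENNReal.ofReal (1/((n:ℝ)+1) - (Real.log ((n:ℝ)+2) - Real.log ((n:ℝ)+1))) := by
  have hb : (1:ℝ) ≤ (n:ℝ)+1 := by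
    have : (0:ℝ) ≤ (n:ℝ) := Nat.cast_nonneg n
    linarith
  have key := lint_t hb
  rw [show ((n:ℝ)+1+1 : ℝ) = (n:ℝ)+2 by ring] at key
  rw [← key]
  apply setLIntegral_congr_fun measurableSet_Ioi
  intro t ht
  have ht' : (0:ℝ) < t := mem_Ioi.mp ht
  have h1 : (0:ℝ) < (n:ℝ)+t+1 := by
    have : (0:ℝ) ≤ (n:ℝ) := Nat.cast_nonneg n
    linarith
  have h2 : (0:ℝ) < (n:ℝ)+t+2 := by linarith
  have hc : (0:ℝ) ≤ 1/((n:ℝ)+t+1) - 1/((n:ℝ)+t+2) := by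
    rw [sub_nonneg]
    apply one_div_le_one_div_of_le h1 (by linarith)
  dsimp only
  rw [← ENNReal.ofReal_mul hc]
  congr 1
  field_simp
  ring

lemma main_lint :
    ∫⁻ y in Ioo (0:ℝ) 1, ∫⁻ x in Ioo (0:ℝ) 1,
        ENNReal.ofReal ((1-x) / ((1-x*y) * (-Real.log (x*y))))
      = ENNReal.ofReal Real.eulerMascheroniConstant := by
  rw [setLIntegral_congr_fun measurableSet_Ioo
    (fun y hy => inner_x_eval hy)]
  rw [lintegral_tsum (fun n => ((measG n).lintegral_prod_right').aemeasurable)]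
  rw [← series_gamma]
  congr 1
  funext n
  rw [lintegral_lintegral_swap ((measG n).aemeasurable)]
  rw [← per_n n]
  apply setLIntegral_congr_fun measurableSet_Ioi
  intro t ht
  have ht' : (0:ℝ) < t := mem_Ioi.mp ht
  have ha : (0:ℝ) ≤ (n:ℝ)+t := add_nonneg (Nat.cast_nonneg n) ht'.le
  dsimp only
  rw [lintegral_const_mul' _ _ ENNReal.ofReal_ne_top, lint_rpow_s13 ha]

theorem sondow_gamma_integral :
    Real.eulerMascheroniConstant =
      -∫ y in (0:ℝ)..1, ∫ x in (0:ℝ)..1, (1 - x) / ((1 - x * y) * Real.log (x * y)) := by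
  have mhr : Measurable (fun p : ℝ × ℝ =>
      (1-p.1) / ((1-p.1*p.2) * (-Real.log (p.1*p.2)))) := by
    apply Measurable.div
    · exact measurable_const.sub measurable_fst
    · exact (measurable_const.sub (measurable_fst.mul measurable_snd)).mul
        (Real.measurable_log.comp (measurable_fst.mul measurable_snd)).neg
  set h : ℝ → ℝ → ℝ := fun x y => (1-x) / ((1-x*y) * (-Real.log (x*y))) with hh
  set φ : ℝ → ℝ≥0∞ := fun y => ∫⁻ x in Ioo (0:ℝ) 1, ENNReal.ofReal (h x y) with hφ
  have mφ : Measurable φ := by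
    rw [hφ]
    exact Measurable.lintegral_prod_left' (f := fun p : ℝ × ℝ => ENNReal.ofReal (h p.1 p.2))
      (mhr.ennreal_ofReal)
  have hmain : ∫⁻ y in Ioo (0:ℝ) 1, φ y = ENNReal.ofReal Real.eulerMascheroniConstant :=
    main_lint
  have hfin : ∀ᵐ y ∂(volume.restrict (Ioo (0:ℝ) 1)), φ y < ∞ := by
    apply ae_lt_top mφ
    rw [hmain]
    exact ENNReal.ofReal_ne_top
  -- inner evaluation for y ∈ Ioo 0 1
  have hinner : ∀ y ∈ Ioo (0:ℝ) 1,
      (∫ x in (0:ℝ)..1, (1 - x) / ((1 - x * y) * Real.log (x * y)))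
        = -(φ y).toReal := by
    intro y hy
    have hneg : ∀ x : ℝ, (1 - x) / ((1 - x * y) * Real.log (x * y)) = -(h x y) := by
      intro x
      rw [hh]
      simp only [mul_neg, div_neg, neg_neg]
    rw [intervalIntegral.integral_of_le (by norm_num : (0:ℝ) ≤ 1),
      integral_Ioc_eq_integral_Ioo]
    have : ∫ x in Ioo (0:ℝ) 1, (1 - x) / ((1 - x * y) * Real.log (x * y))
        = -∫ x in Ioo (0:ℝ) 1, h x y := by
      rw [← integral_neg]
      congr 1
      funext x
      rw [hneg x]
    have h1 : 0 ≤ᵐ[volume.restrict (Ioo (0:ℝ) 1)] fun x => h x y := by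
      filter_upwards [ae_restrict_mem measurableSet_Ioo] with x hx
      rw [hh]
      have hu0 : 0 < x * y := mul_pos hx.1 hy.1
      have hu1 : x * y < 1 := by
        calc x * y < 1 * 1 := mul_lt_mul' hx.2.le hy.2 hy.1.le one_pos
        _ = 1 := by norm_num
      have hl : Real.log (x*y) < 0 := Real.log_neg hu0 hu1
      apply div_nonneg (by linarith [hx.2])
      apply mul_nonneg (by nlinarith [hx.1, hy.2, hx.2, hy.1]) (by linarith)
    have h2 : AEStronglyMeasurable (fun x => h x y) (volume.restrict (Ioo (0:ℝ) 1)) :=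
      (mhr.comp (measurable_id.prodMk measurable_const)).aestronglyMeasurable
    rw [this, integral_eq_lintegral_of_nonneg_ae h1 h2]
  -- outer evaluation
  have houter : (∫ y in (0:ℝ)..1, ∫ x in (0:ℝ)..1,
      (1 - x) / ((1 - x * y) * Real.log (x * y)))
      = -Real.eulerMascheroniConstant := by
    rw [intervalIntegral.integral_of_le (by norm_num : (0:ℝ) ≤ 1),
      integral_Ioc_eq_integral_Ioo]
    rw [setIntegral_congr_fun measurableSet_Ioo (fun y hy => hinner y hy)]
    rw [integral_neg, integral_toReal mφ.aemeasurable hfin, hmain,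
      ENNReal.toReal_ofReal]
    linarith [Real.one_half_lt_eulerMascheroniConstant]
  rw [houter, neg_neg]
end

section
/- For every integer s ≥ 2, ζ(s)·Γ(s) = ∫_0^1 ∫_0^1 (−s)·(−log y)^{s−1} / ((1−xy)·log(xy)) dx dy. -/
open MeasureTheory Real Set Filter intervalIntegral

noncomputable def zg (u : ℝ) : ℝ := ((1 - u) * (-Real.log u))⁻¹

noncomputable def zG (y : ℝ) : ℝ := ∫ u in (0:ℝ)..y, zg u

lemma zg_nonneg {u : ℝ} (h0 : 0 ≤ u) (h1 : u ≤ 1) : 0 ≤ zg u := by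
  have : Real.log u ≤ 0 := Real.log_nonpos h0 h1
  have : 0 ≤ (1 - u) * (-Real.log u) := mul_nonneg (by linarith) (by linarith)
  exact inv_nonneg.mpr this

lemma zg_le {u : ℝ} (h0 : 0 ≤ u) (h1 : u < 1) : zg u ≤ ((1 - u)^2)⁻¹ := by
  rcases eq_or_lt_of_le h0 with rfl | hu
  · norm_num [zg, Real.log_zero]
  · have hlog : Real.log u ≤ u - 1 := Real.log_le_sub_one_of_pos hu
    have h2 : (1 - u)^2 ≤ (1 - u) * (-Real.log u) := by
      have : (1:ℝ) - u ≤ -Real.log u := by linarith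
      calc (1 - u)^2 = (1-u) * (1-u) := sq (1-u) ▸ rfl
        _ ≤ (1 - u) * (-Real.log u) := by nlinarith
    exact inv_anti₀ (pow_pos (by linarith) 2) h2

lemma zg_continuousAt {y : ℝ} (hy : y ∈ Ioo (0:ℝ) 1) : ContinuousAt zg y := by
  have hlog : Real.log y < 0 := Real.log_neg hy.1 hy.2
  have hne : (1 - y) * (-Real.log y) ≠ 0 := by
    have h1 : (0:ℝ) < 1 - y := by linarith [hy.2]
    exact ne_of_gt (mul_pos h1 (by linarith))
  have hc : ContinuousAt (fun u => (1 - u) * (-Real.log u)) y := by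
    exact (continuousAt_const.sub continuousAt_id).mul
      ((Real.continuousAt_log hy.1.ne').neg)
  exact hc.inv₀ hne

lemma zg_continuousOn {y : ℝ} (hy1 : y < 1) : ContinuousOn zg (Icc 0 y) := by
  intro u hu
  rcases eq_or_lt_of_le hu.1 with rfl | hu0
  · -- continuity within at 0
    have key : Tendsto zg (nhdsWithin 0 (Icc 0 y)) (nhds 0) := by
      have hsub : Icc (0:ℝ) y ⊆ {0} ∪ Ioi 0 := by
        intro x hx
        rcases eq_or_lt_of_le hx.1 with rfl | h
        · exact Or.inl rfl
        · exact Or.inr h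
      refine Tendsto.mono_left ?_ (nhdsWithin_mono 0 hsub)
      rw [nhdsWithin_union]
      refine Tendsto.sup ?_ ?_
      · rw [nhdsWithin_singleton]
        have : zg 0 = 0 := by simp [zg, Real.log_zero]
        simpa [this] using tendsto_pure_nhds zg 0
      · have h1 : Tendsto (fun u : ℝ => (1 - u)⁻¹) (nhdsWithin 0 (Ioi 0)) (nhds 1) := by
          have : ContinuousAt (fun u : ℝ => (1 - u)⁻¹) 0 :=
            ((continuousAt_const.sub continuousAt_id).inv₀ (by norm_num))
          simpa using this.continuousWithinAt.tendsto
        have h2 : Tendsto (fun u : ℝ => (-Real.log u)⁻¹) (nhdsWithin 0 (Ioi 0)) (nhds 0) := by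
          have : Tendsto (fun u : ℝ => -Real.log u) (nhdsWithin 0 (Ioi 0)) atTop :=
            tendsto_neg_atBot_atTop.comp Real.tendsto_log_nhdsGT_zero
          exact this.inv_tendsto_atTop
        have := h1.mul h2
        simp only [mul_zero] at this
        refine this.congr (fun u => ?_)
        simp only [zg, mul_inv, inv_neg, mul_neg, neg_neg]
    have : zg 0 = 0 := by simp [zg, Real.log_zero]
    unfold ContinuousWithinAt
    rw [this]
    exact key
  · exact (zg_continuousAt ⟨hu0, lt_of_le_of_lt hu.2 hy1⟩).continuousWithinAt

lemma zg_intervalIntegrable {y : ℝ} (h0 : 0 ≤ y) (h1 : y < 1) :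
    IntervalIntegrable zg volume 0 y :=
  ContinuousOn.intervalIntegrable (by rw [uIcc_of_le h0]; exact zg_continuousOn h1)

lemma zG_hasDerivAt {y : ℝ} (hy : y ∈ Ioo (0:ℝ) 1) : HasDerivAt zG (zg y) y :=
  intervalIntegral.integral_hasDerivAt_right (zg_intervalIntegrable hy.1.le hy.2)
    (ContinuousAt.stronglyMeasurableAtFilter isOpen_Ioo (fun x hx => zg_continuousAt hx) y hy)
    (zg_continuousAt hy)

lemma zG_nonneg {y : ℝ} (h0 : 0 ≤ y) (h1 : y < 1) : 0 ≤ zG y := by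
  apply intervalIntegral.integral_nonneg h0
  intro u hu
  exact zg_nonneg hu.1 (le_trans hu.2 h1.le)

lemma zG_le {y : ℝ} (hy : y ∈ Ioo (0:ℝ) 1) : zG y ≤ (1 - y)⁻¹ - 1 := by
  have hI : ∫ u in (0:ℝ)..y, ((1 - u)^2)⁻¹ = (1 - y)⁻¹ - 1 := by
    have : ∀ u ∈ uIcc (0:ℝ) y, HasDerivAt (fun v => (1 - v)⁻¹) (((1 - u)^2)⁻¹) u := by
      intro u hu
      rw [uIcc_of_le hy.1.le] at hu
      have hne : (1:ℝ) - u ≠ 0 := by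
        have := hu.2; have := hy.2; intro h; nlinarith [hu.1]
      have h1 : HasDerivAt (fun v : ℝ => 1 - v) (-1) u := by
        simpa using (hasDerivAt_id u).const_sub 1
      have := h1.inv hne
      rw [show (- -1 / (1 - u) ^ 2 : ℝ) = ((1 - u) ^ 2)⁻¹ by ring] at this
      exact this
    rw [intervalIntegral.integral_eq_sub_of_hasDerivAt this ?_]
    · norm_num
    · apply ContinuousOn.intervalIntegrable
      intro u hu
      rw [uIcc_of_le hy.1.le] at hu
      have hne : (1:ℝ) - u ≠ 0 := by
        have := hu.2; have := hy.2; intro h; nlinarith [hu.1]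
      exact (((continuousOn_const.sub continuousOn_id).pow 2).inv₀
        (fun x hx => by
          rw [uIcc_of_le hy.1.le] at hx
          have : (1:ℝ) - x ≠ 0 := by have := hx.2; have := hy.2; intro h; nlinarith [hx.1]
          exact pow_ne_zero 2 this)) u (by rwa [uIcc_of_le hy.1.le])
  rw [← hI]
  apply intervalIntegral.integral_mono_on hy.1.le (zg_intervalIntegrable hy.1.le hy.2)
  · apply ContinuousOn.intervalIntegrable
    intro u hu
    rw [uIcc_of_le hy.1.le] at hu
    have hne : (1:ℝ) - u ≠ 0 := by
      have := hu.2; have := hy.2; intro h; nlinarith [hu.1]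
    exact (((continuousOn_const.sub continuousOn_id).pow 2).inv₀
      (fun x hx => by
        rw [uIcc_of_le hy.1.le] at hx
        have : (1:ℝ) - x ≠ 0 := by have := hx.2; have := hy.2; intro h; nlinarith [hx.1]
        exact pow_ne_zero 2 this)) u (by rwa [uIcc_of_le hy.1.le])
  · intro u hu
    exact zg_le hu.1 (lt_of_le_of_lt hu.2 hy.2)

-- integrability of t^m * exp(-(r*t)) on (0,∞)
lemma intExp (m : ℕ) {r : ℝ} (hr : 0 < r) :
    IntegrableOn (fun t : ℝ => t ^ m * Real.exp (-(r * t))) (Ioi 0) := by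
  have h0 : IntegrableOn (fun x : ℝ => Real.exp (-x) * x ^ ((m + 1 : ℝ) - 1)) (Ioi 0) :=
    Real.GammaIntegral_convergent (by positivity)
  have h1 : IntegrableOn (fun x : ℝ => Real.exp (-x) * x ^ m) (Ioi 0) := by
    refine h0.congr_fun (fun x hx => ?_) measurableSet_Ioi
    rw [show (m + 1 : ℝ) - 1 = (m : ℝ) by ring]; simp only [Real.rpow_natCast]
  have h2 : IntegrableOn (fun t : ℝ => Real.exp (-(r * t)) * (r * t) ^ m) (Ioi 0) := by
    have := (integrableOn_Ioi_comp_mul_left_iff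
      (fun x : ℝ => Real.exp (-x) * x ^ m) 0 hr).mpr (by simpa using h1)
    simpa using this
  have h3 : IntegrableOn (fun t : ℝ => ((r:ℝ)^m)⁻¹ * (Real.exp (-(r * t)) * (r * t) ^ m))
      (Ioi 0) := h2.const_mul _
  refine IntegrableOn.congr_fun h3 (fun x hx => ?_) measurableSet_Ioi
  rw [mul_pow]
  field_simp

-- value of the integral
lemma valExp (m : ℕ) {r : ℝ} (hr : 0 < r) :
    ∫ t in Ioi (0:ℝ), t ^ m * Real.exp (-(r * t)) = (1 / r) ^ (m + 1) * (m.factorial : ℝ) := by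
  have := Real.integral_rpow_mul_exp_neg_mul_Ioi (a := (m + 1 : ℝ)) (by positivity) hr
  rw [show (m + 1 : ℝ) - 1 = (m : ℝ) by ring] at this
  simp_rw [Real.rpow_natCast] at this
  rw [show ((m : ℝ) + 1) = ((m + 1 : ℕ) : ℝ) by push_cast; ring, Real.rpow_natCast] at this
  rw [this, show ((m + 1 : ℕ) : ℝ) = (m : ℝ) + 1 by push_cast; ring,
    Real.Gamma_nat_eq_factorial]

lemma image_exp_neg_Ioi : (fun t : ℝ => Real.exp (-t)) '' Ioi 0 = Ioo 0 1 := by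
  ext y
  constructor
  · rintro ⟨t, ht, rfl⟩
    exact ⟨Real.exp_pos _, Real.exp_lt_one_iff.mpr (by simpa using ht)⟩
  · rintro ⟨h0, h1⟩
    refine ⟨-Real.log y, ?_, by simp [Real.exp_log h0]⟩
    simpa using Real.log_neg h0 h1

-- e^t - 1 ≥ t * e^(t/2), hence (e^t-1)⁻¹ ≤ t⁻¹ * e^(-t/2)
lemma exp_sub_one_ge {t : ℝ} (ht : 0 < t) : t * Real.exp (2⁻¹ * t) ≤ Real.exp t - 1 := by
  have hs : t / 2 < Real.sinh (t / 2) := Real.self_lt_sinh_iff.mpr (by linarith)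
  have : Real.exp t - 1 = 2 * Real.sinh (t / 2) * Real.exp (t / 2) := by
    rw [Real.sinh_eq]
    rw [show t = t/2 + t/2 by ring, Real.exp_add]
    rw [Real.exp_neg]
    have := Real.exp_pos (t/2)
    field_simp
    ring
  rw [this, show 2⁻¹ * t = t / 2 by ring]
  have he := Real.exp_pos (t / 2)
  nlinarith

lemma inv_exp_sub_one_le {t : ℝ} (ht : 0 < t) :
    (Real.exp t - 1)⁻¹ ≤ t⁻¹ * Real.exp (-(2⁻¹ * t)) := by
  have h1 : (0:ℝ) < t * Real.exp (2⁻¹ * t) := by positivity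
  have h2 := exp_sub_one_ge ht
  have := inv_anti₀ h1 h2
  rwa [mul_inv, ← Real.exp_neg] at this

lemma exp_neg_mem_Ioo {t : ℝ} (ht : 0 < t) : Real.exp (-t) ∈ Ioo (0:ℝ) 1 :=
  ⟨Real.exp_pos _, Real.exp_lt_one_iff.mpr (by linarith)⟩

lemma zG_exp_le {t : ℝ} (ht : 0 < t) : zG (Real.exp (-t)) ≤ (Real.exp t - 1)⁻¹ := by
  have hy := exp_neg_mem_Ioo ht
  refine le_trans (zG_le hy) (le_of_eq ?_)
  rw [Real.exp_neg]
  have ha : (1:ℝ) < Real.exp t := by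
    rw [← Real.exp_zero]; exact Real.exp_lt_exp.mpr ht
  have h1 : Real.exp t - 1 ≠ 0 := by linarith
  have h2 : Real.exp t ≠ 0 := by positivity
  field_simp
  ring

lemma contOn_zG_comp : ContinuousOn (fun t : ℝ => zG (Real.exp (-t))) (Ioi 0) := by
  have h1 : ContinuousOn zG (Ioo 0 1) :=
    fun y hy => ((zG_hasDerivAt hy).continuousAt).continuousWithinAt
  exact h1.comp (Real.continuous_exp.comp continuous_neg).continuousOn
    (fun t ht => exp_neg_mem_Ioo ht)

lemma contOn_inv_exp_sub_one (m : ℕ) :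
    ContinuousOn (fun t : ℝ => t ^ m * (Real.exp t - 1)⁻¹) (Ioi 0) := by
  apply (continuous_pow m).continuousOn.mul
  apply ContinuousOn.inv₀ (Real.continuous_exp.sub continuous_const).continuousOn
  intro t ht
  have : (1:ℝ) < Real.exp t := by
    rw [← Real.exp_zero]; exact Real.exp_lt_exp.mpr ht
  intro h; linarith [this, sub_eq_zero.mp h]

lemma ID2 (m : ℕ) : IntegrableOn (fun t : ℝ => t ^ (m+1) * (Real.exp t - 1)⁻¹) (Ioi 0) := by
  refine Integrable.mono' (intExp m (by norm_num : (0:ℝ) < 2⁻¹))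
    ((contOn_inv_exp_sub_one (m+1)).aestronglyMeasurable measurableSet_Ioi) ?_
  rw [ae_restrict_iff' measurableSet_Ioi]
  filter_upwards with t ht
  have ht' : (0:ℝ) < t := ht
  have ha : (1:ℝ) < Real.exp t := by
    rw [← Real.exp_zero]; exact Real.exp_lt_exp.mpr ht'
  have hnn : (0:ℝ) ≤ t ^ (m+1) * (Real.exp t - 1)⁻¹ :=
    mul_nonneg (pow_nonneg ht'.le _) (inv_nonneg.mpr (by linarith))
  rw [Real.norm_eq_abs, abs_of_nonneg hnn]
  calc t ^ (m+1) * (Real.exp t - 1)⁻¹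
      ≤ t ^ (m+1) * (t⁻¹ * Real.exp (-(2⁻¹ * t))) := by
        exact mul_le_mul_of_nonneg_left (inv_exp_sub_one_le ht') (by positivity)
    _ = t ^ m * Real.exp (-(2⁻¹ * t)) := by
        rw [pow_succ]; field_simp

lemma ID3 (m : ℕ) : IntegrableOn (fun t : ℝ => t ^ (m+1) * zG (Real.exp (-t))) (Ioi 0) := by
  refine Integrable.mono' (intExp m (by norm_num : (0:ℝ) < 2⁻¹))
    (((continuous_pow (m+1)).continuousOn.mul contOn_zG_comp).aestronglyMeasurable
      measurableSet_Ioi) ?_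
  rw [ae_restrict_iff' measurableSet_Ioi]
  filter_upwards with t ht
  have ht' : (0:ℝ) < t := ht
  have hy := exp_neg_mem_Ioo ht'
  have h0 : 0 ≤ zG (Real.exp (-t)) := zG_nonneg hy.1.le hy.2
  rw [Real.norm_eq_abs, abs_of_nonneg (mul_nonneg (pow_nonneg ht'.le _) h0)]
  calc t ^ (m+1) * zG (Real.exp (-t))
      ≤ t ^ (m+1) * (Real.exp t - 1)⁻¹ :=
        mul_le_mul_of_nonneg_left (zG_exp_le ht') (pow_nonneg ht'.le _)
    _ ≤ t ^ (m+1) * (t⁻¹ * Real.exp (-(2⁻¹ * t))) :=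
        mul_le_mul_of_nonneg_left (inv_exp_sub_one_le ht') (pow_nonneg ht'.le _)
    _ = t ^ m * Real.exp (-(2⁻¹ * t)) := by
        rw [pow_succ]; field_simp

lemma zeta_one_lt_exp {t : ℝ} (ht : 0 < t) : (1:ℝ) < Real.exp t := by
  rw [← Real.exp_zero]; exact Real.exp_lt_exp.mpr ht

lemma uv'_eq (m : ℕ) {t : ℝ} (ht : 0 < t) :
    t ^ (m+2) * (zg (Real.exp (-t)) * (Real.exp (-t) * (-1))) =
      -(t ^ (m+1) * (Real.exp t - 1)⁻¹) := by
  have h1 : Real.exp t - 1 ≠ 0 := by linarith [zeta_one_lt_exp ht]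
  have h2 : Real.exp t ≠ 0 := (Real.exp_pos t).ne'
  have h3 : (1:ℝ) - Real.exp (-t) ≠ 0 := by
    have := (exp_neg_mem_Ioo ht).2; intro h; linarith [sub_eq_zero.mp h]
  simp only [zg, Real.log_exp, neg_neg]
  simp only [Real.exp_neg] at h3 ⊢
  field_simp
  ring

lemma IBP (m : ℕ) :
    ∫ t in Ioi (0:ℝ), ((m:ℝ)+2) * t ^ (m+1) * zG (Real.exp (-t)) =
      ∫ t in Ioi (0:ℝ), t ^ (m+1) * (Real.exp t - 1)⁻¹ := by
  set u : ℝ → ℝ := fun t => t ^ (m+2) with hu_def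
  set v : ℝ → ℝ := fun t => zG (Real.exp (-t)) with hv_def
  set u' : ℝ → ℝ := fun t => ((m:ℝ)+2) * t ^ (m+1) with hu'_def
  set v' : ℝ → ℝ := fun t => zg (Real.exp (-t)) * (Real.exp (-t) * (-1)) with hv'_def
  have hu : ∀ t ∈ Ioi (0:ℝ), HasDerivAt u (u' t) t := by
    intro t _
    have := hasDerivAt_pow (m+2) t
    simpa [hu_def, hu'_def, Nat.add_sub_cancel] using this
  have hv : ∀ t ∈ Ioi (0:ℝ), HasDerivAt v (v' t) t := by
    intro t ht
    have hin : Real.exp (-t) ∈ Ioo (0:ℝ) 1 := exp_neg_mem_Ioo ht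
    have h1 : HasDerivAt (fun t : ℝ => Real.exp (-t)) (Real.exp (-t) * (-1)) t := by
      exact (Real.hasDerivAt_exp (-t)).comp t (hasDerivAt_neg t)
    exact (zG_hasDerivAt hin).comp t h1
  have huv' : IntegrableOn (u * v') (Ioi 0) := by
    refine IntegrableOn.congr_fun ((ID2 m).neg) (fun t ht => ?_) measurableSet_Ioi
    exact (uv'_eq m ht).symm
  have hu'v : IntegrableOn (u' * v) (Ioi 0) := by
    have := (ID3 m).const_mul ((m:ℝ)+2)
    refine IntegrableOn.congr_fun this (fun t ht => ?_) measurableSet_Ioi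
    simp [hu'_def, hv_def, mul_assoc]
  have bound : ∀ t : ℝ, 0 < t → u t * v t ≤ t ^ (m+1) * (t * (Real.exp t - 1)⁻¹) := by
    intro t ht
    have := zG_exp_le ht
    have h0 : (0:ℝ) ≤ t ^ (m+2) := pow_nonneg ht.le _
    calc u t * v t ≤ t ^ (m+2) * (Real.exp t - 1)⁻¹ :=
          mul_le_mul_of_nonneg_left this h0
      _ = t ^ (m+1) * (t * (Real.exp t - 1)⁻¹) := by ring
  have nonneg : ∀ t : ℝ, 0 < t → 0 ≤ u t * v t := by
    intro t ht
    have hin := exp_neg_mem_Ioo ht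
    exact mul_nonneg (pow_nonneg ht.le _) (zG_nonneg hin.1.le hin.2)
  have h_zero : Tendsto (u * v) (nhdsWithin 0 (Ioi 0)) (nhds 0) := by
    apply squeeze_zero' (g := fun t => t ^ (m+1))
    · filter_upwards [self_mem_nhdsWithin] with t ht
      exact nonneg t ht
    · filter_upwards [self_mem_nhdsWithin] with t ht
      have ht' : (0:ℝ) < t := ht
      have hle : (Real.exp t - 1)⁻¹ ≤ t⁻¹ :=
        inv_anti₀ ht' (by linarith [Real.add_one_le_exp t])
      calc (u * v) t ≤ t ^ (m+1) * (t * (Real.exp t - 1)⁻¹) := bound t ht'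
        _ ≤ t ^ (m+1) * (t * t⁻¹) := by
            refine mul_le_mul_of_nonneg_left ?_ (pow_nonneg ht'.le _)
            exact mul_le_mul_of_nonneg_left hle ht'.le
        _ = t ^ (m+1) := by rw [mul_inv_cancel₀ ht'.ne', mul_one]
    · have : Tendsto (fun t : ℝ => t ^ (m+1)) (nhds 0) (nhds 0) := by
        simpa using (continuous_pow (m+1)).tendsto (0:ℝ)
      exact this.mono_left nhdsWithin_le_nhds
  have h_infty : Tendsto (u * v) atTop (nhds 0) := by
    apply squeeze_zero' (g := fun t => t ^ (m+2) * (t⁻¹ * Real.exp (-(2⁻¹ * t))))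
    · filter_upwards [eventually_gt_atTop (0:ℝ)] with t ht
      exact nonneg t ht
    · filter_upwards [eventually_gt_atTop (0:ℝ)] with t ht
      calc (u * v) t ≤ t ^ (m+2) * (Real.exp t - 1)⁻¹ :=
            mul_le_mul_of_nonneg_left (zG_exp_le ht) (pow_nonneg ht.le _)
        _ ≤ t ^ (m+2) * (t⁻¹ * Real.exp (-(2⁻¹ * t))) :=
            mul_le_mul_of_nonneg_left (inv_exp_sub_one_le ht) (pow_nonneg ht.le _)
    · have h := tendsto_rpow_mul_exp_neg_mul_atTop_nhds_zero ((m:ℝ)+1) 2⁻¹ (by norm_num)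
      have heq : ∀ᶠ t : ℝ in atTop,
          t ^ ((m:ℝ)+1) * Real.exp (-2⁻¹ * t) =
            t ^ (m+2) * (t⁻¹ * Real.exp (-(2⁻¹ * t))) := by
        filter_upwards [eventually_gt_atTop (0:ℝ)] with t ht
        rw [show ((m:ℝ)+1) = ((m+1 : ℕ) : ℝ) by push_cast; ring, Real.rpow_natCast]
        rw [neg_mul, pow_succ, pow_succ]
        field_simp
        ring
      exact (h.congr' heq)
  have key := integral_Ioi_mul_deriv_eq_deriv_mul hu hv huv' hu'v h_zero h_infty
  -- key : ∫ u v' = 0 - 0 - ∫ u' v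
  have h1 : ∫ t in Ioi (0:ℝ), u t * v' t = -∫ t in Ioi (0:ℝ), t ^ (m+1) * (Real.exp t - 1)⁻¹ := by
    rw [← MeasureTheory.integral_neg]
    refine setIntegral_congr_fun measurableSet_Ioi (fun t ht => ?_)
    exact uv'_eq m ht
  rw [h1] at key
  have : ∫ t in Ioi (0:ℝ), u' t * v t = ∫ t in Ioi (0:ℝ), t ^ (m+1) * (Real.exp t - 1)⁻¹ := by
    linarith [key]
  simpa [hu'_def, hv_def, mul_assoc] using this

lemma geom_term {t : ℝ} (ht : 0 < t) (m : ℕ) :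
    HasSum (fun n : ℕ => t ^ (m+1) * Real.exp (-(((n:ℝ)+1) * t)))
      (t ^ (m+1) * (Real.exp t - 1)⁻¹) := by
  have hy := exp_neg_mem_Ioo ht
  have hg : HasSum (fun n : ℕ => Real.exp (-t) ^ n) ((1 - Real.exp (-t))⁻¹) :=
    hasSum_geometric_of_lt_one hy.1.le hy.2
  have h2 := hg.mul_left (t ^ (m+1) * Real.exp (-t))
  have hval : t ^ (m+1) * Real.exp (-t) * (1 - Real.exp (-t))⁻¹ =
      t ^ (m+1) * (Real.exp t - 1)⁻¹ := by
    have h1 : Real.exp t - 1 ≠ 0 := by linarith [zeta_one_lt_exp ht]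
    have h3 : (1:ℝ) - Real.exp (-t) ≠ 0 := by
      have := hy.2; intro h; linarith [sub_eq_zero.mp h]
    rw [Real.exp_neg] at h3 ⊢
    have h2' : Real.exp t ≠ 0 := (Real.exp_pos t).ne'
    field_simp
  rw [hval] at h2
  have hf : (fun n : ℕ => t ^ (m+1) * Real.exp (-(((n:ℝ)+1) * t))) =
      fun i : ℕ => t ^ (m + 1) * Real.exp (-t) * Real.exp (-t) ^ i := by
    funext n
    rw [mul_assoc, ← pow_succ']
    rw [show -(((n:ℝ)+1) * t) = ((n+1 : ℕ) : ℝ) * (-t) by push_cast; ring, Real.exp_nat_mul]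
  rw [hf]; exact h2

lemma summable_aux (m : ℕ) : Summable (fun n : ℕ => (1/((n:ℝ)+1)) ^ (m+2)) := by
  have base : Summable (fun n : ℕ => 1 / ((n:ℝ)) ^ (m+2)) :=
    Real.summable_one_div_nat_pow.mpr (by omega)
  have := base.comp_injective Nat.succ_injective
  refine this.congr (fun n => ?_)
  simp only [Function.comp_apply, Nat.succ_eq_add_one]
  push_cast
  rw [div_pow, one_pow]

lemma series_int (m : ℕ) :
    HasSum (fun n : ℕ => (1/((n:ℝ)+1)) ^ (m+2) * ((m+1).factorial : ℝ))
      (∫ t in Ioi (0:ℝ), t ^ (m+1) * (Real.exp t - 1)⁻¹) := by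
  set F : ℕ → ℝ → ℝ := fun n t => t ^ (m+1) * Real.exp (-(((n:ℝ)+1) * t)) with hF
  have hr : ∀ n : ℕ, (0:ℝ) < (n:ℝ) + 1 := fun n => by positivity
  have hInt : ∀ n, Integrable (F n) (volume.restrict (Ioi 0)) := fun n => intExp (m+1) (hr n)
  have hNormEq : ∀ n, (∫ t in Ioi (0:ℝ), ‖F n t‖) =
      (1/((n:ℝ)+1)) ^ (m+2) * ((m+1).factorial : ℝ) := by
    intro n
    rw [setIntegral_congr_fun measurableSet_Ioi
      (fun t (ht : t ∈ Ioi (0:ℝ)) => by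
        rw [Real.norm_eq_abs, abs_of_nonneg (mul_nonneg (pow_nonneg (le_of_lt ht) _)
          (Real.exp_nonneg _))])]
    exact valExp (m+1) (hr n)
  have hSum : Summable fun n => ∫ t in Ioi (0:ℝ), ‖F n t‖ := by
    refine Summable.congr ((summable_aux m).mul_right ((m+1).factorial : ℝ)) (fun n => ?_)
    exact (hNormEq n).symm
  have key := MeasureTheory.hasSum_integral_of_summable_integral_norm hInt hSum
  have h1 : (∫ t in Ioi (0:ℝ), ∑' n, F n t) =
      ∫ t in Ioi (0:ℝ), t ^ (m+1) * (Real.exp t - 1)⁻¹ :=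
    setIntegral_congr_fun measurableSet_Ioi (fun t ht => (geom_term ht m).tsum_eq)
  rw [h1] at key
  refine key.congr_fun (fun n => ?_)
  rw [valExp (m+1) (hr n)]

lemma summable_aux' (m : ℕ) : Summable (fun n : ℕ => 1 / ((n:ℝ)) ^ (m+2)) :=
  Real.summable_one_div_nat_pow.mpr (by omega)

lemma final_cast (k : ℕ) :
    riemannZeta ((k+2 : ℕ) : ℂ) * Complex.Gamma ((k+2 : ℕ) : ℂ) =
      ((∑' n : ℕ, (1/((n:ℝ)+1)) ^ (k+2) * ((k+1).factorial : ℝ) : ℝ) : ℂ) := by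
  have hz : riemannZeta ((k+2 : ℕ) : ℂ) = ∑' n : ℕ, 1 / (n:ℂ) ^ (k+2) :=
    zeta_nat_eq_tsum_of_gt_one (by omega)
  have hG : Complex.Gamma ((k+2 : ℕ) : ℂ) = ((k+1).factorial : ℂ) := by
    rw [show ((k+2 : ℕ) : ℂ) = ((k+1 : ℕ) : ℂ) + 1 by push_cast; ring]
    exact Complex.Gamma_nat_eq_factorial (k+1)
  have hsc : Summable (fun n : ℕ => 1 / (n:ℂ) ^ (k+2)) := by
    refine Summable.of_norm ?_
    refine (summable_aux' k).congr (fun n => ?_)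
    rw [norm_div, norm_one, norm_pow, Complex.norm_natCast]
  rw [hz, hG, ← tsum_mul_right]
  have hsc2 : Summable (fun n : ℕ => 1 / (n:ℂ) ^ (k+2) * ((k+1).factorial : ℂ)) :=
    hsc.mul_right _
  rw [Summable.tsum_eq_zero_add hsc2]
  have h0 : 1 / ((0:ℕ):ℂ) ^ (k+2) * ((k+1).factorial : ℂ) = 0 := by
    norm_num
  rw [h0, zero_add, Complex.ofReal_tsum]
  congr 1
  funext n
  push_cast
  rw [div_pow, one_pow]

lemma inner_eq (k : ℕ) {y : ℝ} (hy : y ∈ Ioo (0:ℝ) 1) :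
    (∫ x in (0:ℝ)..1, (-((k:ℝ)+2)) * (-Real.log y) ^ (k+1) / ((1 - x * y) * Real.log (x * y)))
      = ((k:ℝ)+2) * (-Real.log y) ^ (k+1) * zG y / y := by
  set F : ℝ → ℝ := fun u => (-((k:ℝ)+2)) * (-Real.log y) ^ (k+1) / ((1 - u) * Real.log u)
    with hF
  have e1 : (fun x : ℝ => (-((k:ℝ)+2)) * (-Real.log y) ^ (k+1) / ((1 - x * y) * Real.log (x * y)))
      = fun x => F (x * y) := rfl
  have h := intervalIntegral.integral_comp_mul_right (a := 0) (b := 1) F hy.1.ne'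
  simp only [zero_mul, one_mul, smul_eq_mul] at h
  rw [show (∫ x in (0:ℝ)..1, (-((k:ℝ)+2)) * (-Real.log y) ^ (k+1) /
      ((1 - x * y) * Real.log (x * y))) = ∫ x in (0:ℝ)..1, F (x * y) from rfl, h]
  have e2 : ∀ u : ℝ, F u = (-((k:ℝ)+2)) * (-Real.log y) ^ (k+1) * (-zg u) := by
    intro u
    rw [hF]
    simp only [zg]
    rw [div_eq_mul_inv]
    congr 1
    simp only [mul_neg, inv_neg, neg_neg]
  simp_rw [e2]
  rw [intervalIntegral.integral_const_mul, intervalIntegral.integral_neg]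
  show y⁻¹ * ((-((k:ℝ)+2)) * (-Real.log y) ^ (k+1) * -zG y) = _
  field_simp

theorem zeta_gamma_double_integral (s : ℕ) (hs : 2 ≤ s) :
    riemannZeta s * Complex.Gamma s =
      ((∫ y in (0:ℝ)..1, ∫ x in (0:ℝ)..1,
          (-(s : ℝ)) * (-Real.log y) ^ (s - 1) / ((1 - x * y) * Real.log (x * y))) : ℝ) := by
  obtain ⟨k, rfl⟩ : ∃ k, s = k + 2 := ⟨s - 2, by omega⟩
  have hsub : k + 2 - 1 = k + 1 := by omega
  rw [final_cast k]
  refine Complex.ofReal_inj.mpr ?_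
  have step1 : (∫ y in (0:ℝ)..1, ∫ x in (0:ℝ)..1,
      (-((k+2:ℕ) : ℝ)) * (-Real.log y) ^ (k+2-1) / ((1 - x * y) * Real.log (x * y)))
      = ∫ y in Ioo (0:ℝ) 1, ((k:ℝ)+2) * (-Real.log y) ^ (k+1) * zG y / y := by
    rw [intervalIntegral.integral_of_le zero_le_one, MeasureTheory.integral_Ioc_eq_integral_Ioo]
    refine setIntegral_congr_fun measurableSet_Ioo (fun y hy => ?_)
    simp only [hsub]
    have hcast : ((k+2:ℕ) : ℝ) = (k:ℝ) + 2 := by push_cast; ring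
    rw [hcast]
    exact inner_eq k hy
  have hderiv : ∀ t ∈ Ioi (0:ℝ), HasDerivWithinAt (fun t : ℝ => Real.exp (-t))
      (Real.exp (-t) * (-1)) (Ioi 0) t :=
    fun t _ => ((Real.hasDerivAt_exp (-t)).comp t (hasDerivAt_neg t)).hasDerivWithinAt
  have hinj : InjOn (fun t : ℝ => Real.exp (-t)) (Ioi 0) := by
    intro a _ b _ h
    have := Real.exp_injective h
    linarith [neg_injective this]
  have step2 : (∫ y in Ioo (0:ℝ) 1, ((k:ℝ)+2) * (-Real.log y) ^ (k+1) * zG y / y)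
      = ∫ t in Ioi (0:ℝ), ((k:ℝ)+2) * t ^ (k+1) * zG (Real.exp (-t)) := by
    rw [← image_exp_neg_Ioi,
      integral_image_eq_integral_abs_deriv_smul measurableSet_Ioi hderiv hinj]
    refine setIntegral_congr_fun measurableSet_Ioi (fun t ht => ?_)
    have hexp : (0:ℝ) < Real.exp (-t) := Real.exp_pos _
    rw [abs_mul, abs_neg, abs_one, mul_one, abs_of_pos hexp, smul_eq_mul]
    rw [Real.log_exp, neg_neg]
    field_simp
  rw [step1, step2, IBP k]
  exact (series_int k).tsum_eq
end
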